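/- arXiv:2011.13302 — 8 statements merged into one kernel-verified Lean document; each statement's English description precedes it below -/
import Mathlib

section
/- Fix an integer d ≥ 2 and a real number p ≥ 1, and set θ = 1/p. Let the coefficients a_i^{(k)} be defined by the stated recursion. Then for every c ∈ [0,1]: a_1^{(d)}·(1-c)^{d-1} + Σ_{i=2}^{d} a_i^{(d)} · ((d-1)!/((d-i)!·(i-2)!)) · ∫_{c^θ}^{1} (1 - c/x^p)^{d-1} · x^{d-i} (1-x)^{i-2} dx = (1 - c^θ)^{d-1}. (In other words, the probability measure a_1^{(d)} δ_1 + Σ_{i=2}^d a_i^{(d)} Beta(d+1-i, i-1) has Williamson d-transform x ↦ (1-x^θ)_+^{d-1} after the power transform v ↦ v^p.) -/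
open MeasureTheory Finset

noncomputable def II (p θ c : ℝ) (n s t : ℕ) : ℝ :=
  ∫ x in (c ^ θ)..1, (1 - c / x ^ p) ^ n * x ^ s * (1 - x) ^ t

lemma contK {p θ c : ℝ} (hc0 : 0 ≤ c) :
    ContinuousOn (fun x : ℝ => c / x ^ p) (Set.Icc (c ^ θ) 1) := by
  rcases eq_or_lt_of_le hc0 with h | h
  · have : (fun x : ℝ => c / x ^ p) = fun _ => (0:ℝ) := by
      funext x; rw [← h, zero_div]
    rw [this]; exact continuousOn_const
  · have hpos : 0 < c ^ θ := Real.rpow_pos_of_pos h θ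
    apply ContinuousOn.div continuousOn_const
    · intro x hx
      exact (Real.continuousAt_rpow_const x p
        (Or.inl (lt_of_lt_of_le hpos hx.1).ne')).continuousWithinAt
    · intro x hx
      exact (Real.rpow_pos_of_pos (lt_of_lt_of_le hpos hx.1) p).ne'

lemma contOn {p θ c : ℝ} (hc0 : 0 ≤ c) (n s t : ℕ) :
    ContinuousOn (fun x : ℝ => (1 - c / x ^ p) ^ n * x ^ s * (1 - x) ^ t)
      (Set.Icc (c ^ θ) 1) := by
  apply ContinuousOn.mul
  apply ContinuousOn.mul
  · exact (continuousOn_const.sub (contK (θ := θ) hc0)).pow n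
  · exact (continuous_pow s).continuousOn
  · exact ((continuous_const.sub continuous_id).pow t).continuousOn

lemma derivG {p θ c : ℝ} (hp : 1 ≤ p) (hθ : θ = 1 / p) (m s t : ℕ)
    {x : ℝ} (hx : 0 < x) :
    HasDerivAt (fun y : ℝ => θ / ((m:ℝ)+1) * ((1 - c / y ^ p) ^ (m+1) * y ^ (s+1) * (1 - y) ^ t))
      ((1 - c / x ^ p) ^ m * x ^ s * (1 - x) ^ t
        - (1 - c / x ^ p) ^ (m+1) * x ^ s * (1 - x) ^ t
        + (((s:ℝ)+1) * θ / ((m:ℝ)+1)) * ((1 - c / x ^ p) ^ (m+1) * x ^ s * (1 - x) ^ t)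
        - ((t:ℝ) * θ / ((m:ℝ)+1)) * ((1 - c / x ^ p) ^ (m+1) * x ^ (s+1) * (1 - x) ^ (t-1))) x := by
  have hp0 : 0 < p := lt_of_lt_of_le one_pos hp
  have hx' : x ≠ 0 := hx.ne'
  have hX : 0 < x ^ p := Real.rpow_pos_of_pos hx p
  have d1 : HasDerivAt (fun y : ℝ => y ^ p) (p * x ^ (p-1)) x :=
    Real.hasDerivAt_rpow_const (Or.inl hx')
  have d2 : HasDerivAt (fun y : ℝ => c / y ^ p)
      ((0 * x ^ p - c * (p * x ^ (p-1))) / (x ^ p) ^ 2) x :=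
    (hasDerivAt_const x c).div d1 hX.ne'
  have d3 : HasDerivAt (fun y : ℝ => 1 - c / y ^ p)
      (-((0 * x ^ p - c * (p * x ^ (p-1))) / (x ^ p) ^ 2)) x := d2.const_sub 1
  have d4 := d3.pow (m+1)
  have d5 := hasDerivAt_pow (s+1) x
  have d6 : HasDerivAt (fun y : ℝ => (1 - y) ^ t)
      ((t:ℝ) * (1 - x) ^ (t-1) * (-1)) x := ((hasDerivAt_id x).const_sub 1).pow t
  have dg := (((d4.mul d5).mul d6).const_mul (θ / ((m:ℝ)+1)))
  convert dg using 1
  · rfl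
  · rfl
  · rfl
  have hxp1 : x ^ (p-1) = x ^ p / x := by rw [Real.rpow_sub hx, Real.rpow_one]
  simp only [Nat.add_sub_cancel, hxp1, Pi.pow_apply, Pi.mul_apply]
  have hmne : ((m:ℝ)+1) ≠ 0 := by positivity
  have hpne : p ≠ 0 := hp0.ne'
  have hXne : x ^ p ≠ 0 := hX.ne'
  push_cast
  generalize x ^ p = X at hXne ⊢
  obtain ⟨Z, rfl⟩ : ∃ Z, c = Z * X := ⟨c / X, by field_simp⟩
  simp only [mul_div_cancel_right₀ _ hXne]
  rcases Nat.eq_zero_or_pos t with rfl | ht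
  · simp only [Nat.cast_zero, pow_zero, Nat.zero_sub, zero_mul, mul_one, mul_zero, sub_zero]
    rw [hθ]
    field_simp
    ring
  · obtain ⟨u, rfl⟩ : ∃ u, t = u + 1 := ⟨t-1, by omega⟩
    simp only [Nat.add_sub_cancel]
    rw [hθ]
    have h1x : (1 - x) ^ (u+1) = (1-x)^u * (1-x) := pow_succ _ _
    rw [h1x]
    field_simp
    ring

lemma ibp {p θ c : ℝ} (hp : 1 ≤ p) (hθ : θ = 1 / p) (hc0 : 0 ≤ c) (hc1 : c ≤ 1)
    (m s t : ℕ) :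
    ∫ x in (c ^ θ)..1, (1 - c / x ^ p) ^ m * x ^ s * (1 - x) ^ t
      = (1 - ((s:ℝ)+1) * θ / ((m:ℝ)+1))
          * (∫ x in (c ^ θ)..1, (1 - c / x ^ p) ^ (m+1) * x ^ s * (1 - x) ^ t)
        + ((t:ℝ) * θ / ((m:ℝ)+1))
          * (∫ x in (c ^ θ)..1, (1 - c / x ^ p) ^ (m+1) * x ^ (s+1) * (1 - x) ^ (t-1))
        + (θ / ((m:ℝ)+1)) * (1-c) ^ (m+1) * (if t = 0 then 1 else 0) := by
  have hθ0 : 0 < θ := by rw [hθ]; positivity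
  have hl0 : 0 ≤ c ^ θ := Real.rpow_nonneg hc0 θ
  have hl1 : c ^ θ ≤ 1 := Real.rpow_le_one hc0 hc1 hθ0.le
  have huicc : Set.uIcc (c ^ θ) 1 = Set.Icc (c ^ θ) 1 := Set.uIcc_of_le hl1
  have i1 : IntervalIntegrable (fun x : ℝ => (1 - c / x ^ p) ^ m * x ^ s * (1 - x) ^ t)
      volume (c ^ θ) 1 := by
    apply ContinuousOn.intervalIntegrable; rw [huicc]; exact contOn hc0 m s t
  have i2 : IntervalIntegrable (fun x : ℝ => (1 - c / x ^ p) ^ (m+1) * x ^ s * (1 - x) ^ t)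
      volume (c ^ θ) 1 := by
    apply ContinuousOn.intervalIntegrable; rw [huicc]; exact contOn hc0 (m+1) s t
  have i4 : IntervalIntegrable (fun x : ℝ => (1 - c / x ^ p) ^ (m+1) * x ^ (s+1) * (1 - x) ^ (t-1))
      volume (c ^ θ) 1 := by
    apply ContinuousOn.intervalIntegrable; rw [huicc]; exact contOn hc0 (m+1) (s+1) (t-1)
  set g : ℝ → ℝ :=
    fun y => θ / ((m:ℝ)+1) * ((1 - c / y ^ p) ^ (m+1) * y ^ (s+1) * (1 - y) ^ t) with hg
  have hcontg : ContinuousOn g (Set.Icc (c ^ θ) 1) :=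
    continuousOn_const.mul (contOn hc0 (m+1) (s+1) t)
  have hftc : (∫ x in (c ^ θ)..1,
      ((1 - c / x ^ p) ^ m * x ^ s * (1 - x) ^ t
        - (1 - c / x ^ p) ^ (m+1) * x ^ s * (1 - x) ^ t
        + (((s:ℝ)+1) * θ / ((m:ℝ)+1)) * ((1 - c / x ^ p) ^ (m+1) * x ^ s * (1 - x) ^ t)
        - ((t:ℝ) * θ / ((m:ℝ)+1)) * ((1 - c / x ^ p) ^ (m+1) * x ^ (s+1) * (1 - x) ^ (t-1))))
      = g 1 - g (c ^ θ) := by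
    apply intervalIntegral.integral_eq_sub_of_hasDeriv_right_of_le hl1 hcontg
    · intro x hx
      have hx0 : 0 < x := lt_of_le_of_lt hl0 hx.1
      exact (derivG hp hθ m s t hx0).hasDerivWithinAt
    · apply ContinuousOn.intervalIntegrable
      rw [huicc]
      exact ((((contOn hc0 m s t).sub (contOn hc0 (m+1) s t)).add
        (continuousOn_const.mul (contOn hc0 (m+1) s t))).sub
        (continuousOn_const.mul (contOn hc0 (m+1) (s+1) (t-1))))
  rw [intervalIntegral.integral_sub (((i1.sub i2)).add (i2.const_mul _)) (i4.const_mul _),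
    intervalIntegral.integral_add (i1.sub i2) (i2.const_mul _),
    intervalIntegral.integral_sub i1 i2,
    intervalIntegral.integral_const_mul, intervalIntegral.integral_const_mul] at hftc
  have hg1 : g 1 = (θ / ((m:ℝ)+1)) * (1-c) ^ (m+1) * (if t = 0 then 1 else 0) := by
    show θ / ((m:ℝ)+1) * ((1 - c / (1:ℝ) ^ p) ^ (m+1) * (1:ℝ) ^ (s+1) * (1 - 1) ^ t)
      = (θ / ((m:ℝ)+1)) * (1-c) ^ (m+1) * (if t = 0 then 1 else 0)
    rcases Nat.eq_zero_or_pos t with rfl | ht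
    · simp [Real.one_rpow]
    · rw [sub_self, zero_pow (by omega), if_neg (by omega)]
      ring
  have hgl : g (c ^ θ) = 0 := by
    show θ / ((m:ℝ)+1) * ((1 - c / (c ^ θ) ^ p) ^ (m+1) * (c ^ θ) ^ (s+1) * (1 - c ^ θ) ^ t) = 0
    rcases eq_or_lt_of_le hc0 with h | h
    · rw [← h, Real.zero_rpow hθ0.ne']
      rw [zero_pow (by omega : s+1 ≠ 0)]
      ring
    · have hcp : (c ^ θ) ^ p = c := by
        rw [← Real.rpow_mul hc0, show θ * p = 1 by rw [hθ]; field_simp, Real.rpow_one]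
      rw [hcp, div_self h.ne', sub_self, zero_pow (by omega : m+1 ≠ 0)]
      ring
  rw [hg1, hgl] at hftc
  linear_combination hftc


lemma ibpII {p θ c : ℝ} (hp : 1 ≤ p) (hθ : θ = 1 / p) (hc0 : 0 ≤ c) (hc1 : c ≤ 1)
    (m s t : ℕ) :
    II p θ c m s t
      = (1 - ((s:ℝ)+1) * θ / ((m:ℝ)+1)) * II p θ c (m+1) s t
        + ((t:ℝ) * θ / ((m:ℝ)+1)) * II p θ c (m+1) (s+1) (t-1)
        + (θ / ((m:ℝ)+1)) * (1-c) ^ (m+1) * (if t = 0 then 1 else 0) :=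
  ibp hp hθ hc0 hc1 m s t

lemma coeffN {k q j : ℕ} (h1 : 1 ≤ j) (h2 : j ≤ q) (h3 : q ≤ k) :
    (q+1-j) * ((k-1).choose (q+1-j)) = ((j-1)+(k-q)) * ((k-1).choose (q-j)) := by
  have h := Nat.choose_succ_right_eq (k-1) (q-j)
  have e1 : q+1-j = q-j+1 := by omega
  have e2 : (k-1)-(q-j) = (j-1)+(k-q) := by omega
  rw [e1, Nat.mul_comm, h, e2, Nat.mul_comm]

lemma sLem {p θ c : ℝ} (hp : 1 ≤ p) (hθ : θ = 1 / p) (hc0 : 0 ≤ c) (hc1 : c ≤ 1)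
    (a : ℕ → ℕ → ℝ)
    (hzero : ∀ k, a k 0 = 0)
    (htop : ∀ k, a k (k + 1) = 0)
    (hinit : a 1 1 = 1)
    (hrec : ∀ k i, 1 ≤ k → 1 ≤ i → i ≤ k + 1 →
      a (k + 1) i = a k i * (θ * ((k : ℝ) + 1 - (i : ℝ)) / (k : ℝ))
        + a k (i - 1) * (1 - θ * ((k : ℝ) + 1 - (i : ℝ) + 1) / (k : ℝ)))
    (k : ℕ) (hk : 1 ≤ k) :
    ∀ q, 1 ≤ q → q ≤ k →
      ∑ j ∈ Icc 1 q, a q j * ((k:ℝ) * (((k-1).choose (q-j) : ℕ) : ℝ))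
          * II p θ c (q-1) (q-j) ((j-1)+(k-q))
        = (1 - c ^ θ) ^ k := by
  have hθ0 : 0 < θ := by rw [hθ]; positivity
  refine Nat.le_induction ?_ ?_
  · -- base case q = 1
    intro _
    rw [Finset.Icc_self, Finset.sum_singleton, hinit]
    have hb : II p θ c 0 0 (0 + (k-1)) = (1 - c ^ θ) ^ k / k := by
      unfold II
      simp only [pow_zero, one_mul, Nat.zero_add]
      rw [intervalIntegral.integral_comp_sub_left (fun u => u ^ (k-1)) 1]
      rw [sub_self, integral_pow, Nat.sub_add_cancel hk]
      rw [zero_pow (by omega : k ≠ 0), sub_zero,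
        show (((k-1:ℕ)):ℝ) + 1 = (k:ℝ) by push_cast [Nat.cast_sub hk]; ring]
    simp only [Nat.sub_self, Nat.choose_zero_right, Nat.cast_one, mul_one, hb]
    have hkne : (k:ℝ) ≠ 0 := by positivity
    field_simp
  · -- induction step
    intro q hq IH hqk1
    have hqk : q ≤ k := by omega
    have IH' := IH hqk
    have hqR : ((q:ℝ)) ≠ 0 := by positivity
    have key : ∀ j ∈ Icc 1 q,
        a q j * (θ * ((q:ℝ) + 1 - (j:ℝ)) / q)
            * ((k:ℝ) * (((k-1).choose (q+1-j) : ℕ) : ℝ))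
            * II p θ c q (q+1-j) ((j-1)+(k-(q+1)))
          + a q (j+1-1) * (1 - θ * ((q:ℝ) + 1 - (((j+1):ℕ):ℝ) + 1) / q)
            * ((k:ℝ) * (((k-1).choose (q+1-(j+1)) : ℕ) : ℝ))
            * II p θ c q (q+1-(j+1)) (((j+1)-1)+(k-(q+1)))
        = a q j * ((k:ℝ) * (((k-1).choose (q-j) : ℕ) : ℝ))
            * II p θ c (q-1) (q-j) ((j-1)+(k-q)) := by
      intro j hj
      rw [Finset.mem_Icc] at hj
      obtain ⟨hj1, hjq⟩ := hj
      rw [show j+1-1 = j by omega, show q+1-(j+1) = q-j by omega,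
        show j+(k-(q+1)) = (j-1)+(k-q) by omega]
      have hibp := ibpII hp hθ hc0 hc1 (q-1) (q-j) ((j-1)+(k-q))
      rw [Nat.sub_add_cancel hq] at hibp
      have ht0 : ¬ ((j-1)+(k-q) = 0) := by omega
      rw [if_neg ht0, mul_zero, add_zero] at hibp
      rw [show (((q-j : ℕ)):ℝ) + 1 = (q:ℝ) + 1 - (j:ℝ) by
            push_cast [Nat.cast_sub hjq]; ring,
          show (((q-1 : ℕ)):ℝ) + 1 = (q:ℝ) by push_cast [Nat.cast_sub hq]; ring,
          show (j-1)+(k-q)-1 = (j-1)+(k-(q+1)) by omega,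
          show q-j+1 = q+1-j by omega] at hibp
      rw [hibp]
      have hnR : ((((q+1-j) * ((k-1).choose (q+1-j)) : ℕ)):ℝ)
          = ((((j-1)+(k-q)) * ((k-1).choose (q-j)) : ℕ) : ℝ) := by
        rw [coeffN hj1 hjq hqk]
      push_cast [Nat.cast_sub hj1, Nat.cast_sub hjq, Nat.cast_sub hqk,
        Nat.cast_sub (by omega : j ≤ q+1)] at hnR ⊢
      linear_combination (a q j * θ / (q:ℝ) * (k:ℝ)
        * II p θ c q (q+1-j) ((j-1)+(k-(q+1)))) * hnR
    simp only [Nat.add_sub_cancel]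
    have hsplit : ∀ j ∈ Icc 1 (q+1),
        a (q+1) j * ((k:ℝ) * (((k-1).choose (q+1-j) : ℕ) : ℝ))
            * II p θ c q (q+1-j) ((j-1)+(k-(q+1)))
          = a q j * (θ * ((q:ℝ)+1-(j:ℝ)) / q) * ((k:ℝ) * (((k-1).choose (q+1-j) : ℕ):ℝ))
              * II p θ c q (q+1-j) ((j-1)+(k-(q+1)))
            + a q (j-1) * (1 - θ * ((q:ℝ)+1-(j:ℝ)+1) / q)
              * ((k:ℝ) * (((k-1).choose (q+1-j) : ℕ):ℝ))
              * II p θ c q (q+1-j) ((j-1)+(k-(q+1))) := by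
      intro j hj; rw [Finset.mem_Icc] at hj
      rw [hrec q j hq hj.1 (by omega)]; ring
    rw [Finset.sum_congr rfl hsplit, Finset.sum_add_distrib]
    rw [Finset.sum_Icc_succ_top (by omega : 1 ≤ q+1)]
    rw [← Finset.add_sum_Ioc_eq_sum_Icc (by omega : (1:ℕ) ≤ q+1)]
    simp only [htop, hzero, Nat.sub_self, zero_mul, mul_zero, add_zero, zero_add]
    rw [← Finset.Icc_add_one_left_eq_Ioc,
      ← Finset.map_add_right_Icc 1 q 1, Finset.sum_map]
    simp only [addRightEmbedding_apply]
    rw [← Finset.sum_add_distrib]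
    rw [Finset.sum_congr rfl key, IH']


lemma finLem {p θ c : ℝ} (hp : 1 ≤ p) (hθ : θ = 1 / p) (hc0 : 0 ≤ c) (hc1 : c ≤ 1)
    (a : ℕ → ℕ → ℝ)
    (hzero : ∀ k, a k 0 = 0)
    (htop : ∀ k, a k (k + 1) = 0)
    (hinit : a 1 1 = 1)
    (hrec : ∀ k i, 1 ≤ k → 1 ≤ i → i ≤ k + 1 →
      a (k + 1) i = a k i * (θ * ((k : ℝ) + 1 - (i : ℝ)) / (k : ℝ))
        + a k (i - 1) * (1 - θ * ((k : ℝ) + 1 - (i : ℝ) + 1) / (k : ℝ)))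
    (k : ℕ) (hk : 1 ≤ k) :
    a (k+1) 1 * (1-c) ^ k
      + ∑ i ∈ Icc 2 (k+1), a (k+1) i * ((k:ℝ) * (((k-1).choose (k+1-i) : ℕ) : ℝ))
          * II p θ c k (k+1-i) (i-2)
      = (1 - c ^ θ) ^ k := by
  have hθ0 : 0 < θ := by rw [hθ]; positivity
  have hkR : ((k:ℝ)) ≠ 0 := by positivity
  have hS := sLem hp hθ hc0 hc1 a hzero htop hinit hrec k hk k hk le_rfl
  simp only [Nat.sub_self, Nat.add_zero] at hS
  have key2 : ∀ j ∈ Icc 1 k,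
      a k j * (θ * ((k:ℝ) + 1 - (j:ℝ)) / k)
          * ((k:ℝ) * (((k-1).choose (k+1-j) : ℕ) : ℝ))
          * II p θ c k (k+1-j) (j-2)
        + a k (j+1-1) * (1 - θ * ((k:ℝ) + 1 - (((j+1):ℕ):ℝ) + 1) / k)
          * ((k:ℝ) * (((k-1).choose (k+1-(j+1)) : ℕ) : ℝ))
          * II p θ c k (k+1-(j+1)) ((j+1)-2)
        + (if j = 1 then a (k+1) 1 * (1-c) ^ k else 0)
      = a k j * ((k:ℝ) * (((k-1).choose (k-j) : ℕ) : ℝ))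
          * II p θ c (k-1) (k-j) (j-1) := by
    intro j hj
    rw [Finset.mem_Icc] at hj
    obtain ⟨hj1, hjk⟩ := hj
    have hibp := ibpII hp hθ hc0 hc1 (k-1) (k-j) (j-1)
    rw [Nat.sub_add_cancel hk] at hibp
    rw [show (((k-j : ℕ)):ℝ) + 1 = (k:ℝ) + 1 - (j:ℝ) by
          push_cast [Nat.cast_sub hjk]; ring,
        show (((k-1 : ℕ)):ℝ) + 1 = (k:ℝ) by push_cast [Nat.cast_sub hk]; ring,
        show k-j+1 = k+1-j by omega] at hibp
    rw [show j+1-1 = j by omega, show k+1-(j+1) = k-j by omega,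
      show (j+1)-2 = j-1 by omega]
    rcases eq_or_lt_of_le hj1 with h1 | h1
    · -- j = 1
      subst h1
      rw [if_pos rfl]
      rw [show (k:ℕ)+1-1 = k by omega] at hibp ⊢
      rw [show ((k-1).choose k) = 0 from Nat.choose_eq_zero_of_lt (by omega)]
      simp only [show (1:ℕ)-1 = 0 from rfl, show (1:ℕ)-2 = 0 from rfl,
        show (1:ℕ)-1-1 = 0 from rfl] at hibp ⊢
      have hb := hrec k 1 hk le_rfl (by omega)
      rw [show (1:ℕ)-1 = 0 from rfl, hzero] at hb
      rw [hibp]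
      push_cast at hb ⊢
      rw [Nat.choose_self]
      push_cast
      linear_combination ((1-c) ^ k) * hb
    · -- j ≥ 2
      have hj2 : 2 ≤ j := h1
      rw [if_neg (by omega : ¬ (j-1 = 0)), mul_zero, add_zero,
        show j-1-1 = j-2 by omega] at hibp
      rw [if_neg (by omega : ¬ (j = 1)), add_zero]
      rw [hibp]
      have hnR : ((((k+1-j) * ((k-1).choose (k+1-j)) : ℕ)):ℝ)
          = ((((j-1)+(k-k)) * ((k-1).choose (k-j)) : ℕ) : ℝ) := by
        rw [coeffN hj1 hjk le_rfl]
      rw [Nat.sub_self, Nat.add_zero] at hnR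
      push_cast [Nat.cast_sub hj1, Nat.cast_sub hjk,
        Nat.cast_sub (by omega : j ≤ k+1)] at hnR ⊢
      linear_combination (a k j * θ / (k:ℝ) * (k:ℝ)
        * II p θ c k (k+1-j) (j-2)) * hnR
  -- now manipulate the goal
  have hsplit : ∀ i ∈ Icc 2 (k+1),
      a (k+1) i * ((k:ℝ) * (((k-1).choose (k+1-i) : ℕ) : ℝ)) * II p θ c k (k+1-i) (i-2)
        = a k i * (θ * ((k:ℝ)+1-(i:ℝ)) / k) * ((k:ℝ) * (((k-1).choose (k+1-i) : ℕ):ℝ))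
            * II p θ c k (k+1-i) (i-2)
          + a k (i-1) * (1 - θ * ((k:ℝ)+1-(i:ℝ)+1) / k)
            * ((k:ℝ) * (((k-1).choose (k+1-i) : ℕ):ℝ))
            * II p θ c k (k+1-i) (i-2) := by
    intro i hi; rw [Finset.mem_Icc] at hi
    rw [hrec k i hk (by omega) (by omega)]; ring
  rw [Finset.sum_congr rfl hsplit, Finset.sum_add_distrib]
  -- extend the β-sum to Icc 1 (k+1)
  have hext : ∑ i ∈ Icc 2 (k+1),
      a k i * (θ * ((k:ℝ)+1-(i:ℝ)) / k) * ((k:ℝ) * (((k-1).choose (k+1-i) : ℕ):ℝ))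
        * II p θ c k (k+1-i) (i-2)
      = ∑ i ∈ Icc 1 (k+1),
      a k i * (θ * ((k:ℝ)+1-(i:ℝ)) / k) * ((k:ℝ) * (((k-1).choose (k+1-i) : ℕ):ℝ))
        * II p θ c k (k+1-i) (i-2) := by
    rw [← Finset.add_sum_Ioc_eq_sum_Icc (by omega : (1:ℕ) ≤ k+1)]
    rw [show k+1-1 = k by omega,
      show ((k-1).choose k) = 0 from Nat.choose_eq_zero_of_lt (by omega)]
    rw [← Finset.Icc_add_one_left_eq_Ioc]
    norm_num
  rw [hext]
  rw [Finset.sum_Icc_succ_top (by omega : 1 ≤ k+1)]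
  simp only [htop, zero_mul, mul_zero, add_zero]
  -- reindex the α-sum
  have hmap : Icc 2 (k+1) = (Icc 1 k).map (addRightEmbedding 1) := by
    rw [Finset.map_add_right_Icc]
  rw [hmap, Finset.sum_map]
  simp only [addRightEmbedding_apply]
  -- turn boundary into a sum
  have hbd : a (k+1) 1 * (1-c) ^ k
      = ∑ j ∈ Icc 1 k, (if j = 1 then a (k+1) 1 * (1-c) ^ k else 0) := by
    rw [Finset.sum_ite_eq' (Icc 1 k) 1 (fun _ => a (k+1) 1 * (1-c) ^ k)]
    rw [if_pos (by rw [Finset.mem_Icc]; omega)]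
  rw [hbd, ← Finset.sum_add_distrib, ← Finset.sum_add_distrib]
  refine Eq.trans (Finset.sum_congr rfl ?_) hS
  intro j hj
  rw [← key2 j hj]; ring


lemma factCo {k : ℕ} (hk : 1 ≤ k) (A B : ℕ) (hAB : A + B = k-1) :
    ((Nat.factorial k : ℕ):ℝ) / ((A.factorial : ℝ) * (B.factorial : ℝ))
      = (k:ℝ) * (((k-1).choose A : ℕ) : ℝ) := by
  have h1 : (k-1).choose A * A.factorial * B.factorial = (k-1).factorial := by
    have h := Nat.choose_mul_factorial_mul_factorial (show A ≤ k-1 by omega)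
    rw [show k-1-A = B by omega] at h
    exact h
  have h2 : Nat.factorial k = k * Nat.factorial (k-1) := by
    rw [← Nat.mul_factorial_pred (by omega)]
  have hA : (A.factorial : ℝ) ≠ 0 := by positivity
  have hB : (B.factorial : ℝ) ≠ 0 := by positivity
  rw [div_eq_iff (by positivity)]
  have : Nat.factorial k = k * ((k-1).choose A * A.factorial * B.factorial) := by
    rw [h1, h2]
  exact_mod_cast (by push_cast [this]; ring : ((Nat.factorial k : ℕ):ℝ)
    = (k:ℝ) * (((k-1).choose A : ℕ) : ℝ) * ((A.factorial : ℝ) * (B.factorial : ℝ)))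

/-- The probability measure
`a_1^{(d)} δ_1 + Σ_{i=2}^d a_i^{(d)} Beta(d+1-i, i-1)` has Williamson `d`-transform
`x ↦ (1-x^θ)_+^{d-1}` after the power transform `v ↦ v^p`, where the coefficients
`a_i^{(k)}` are given by the recursion of the paper. -/
theorem williamson_transform_of_mixture
    (d : ℕ) (hd : 2 ≤ d) (p θ : ℝ) (hp : 1 ≤ p) (hθ : θ = 1 / p)
    (a : ℕ → ℕ → ℝ)
    (hzero : ∀ k, a k 0 = 0)
    (htop : ∀ k, a k (k + 1) = 0)
    (hinit : a 1 1 = 1)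
    (hrec : ∀ k i, 1 ≤ k → 1 ≤ i → i ≤ k + 1 →
      a (k + 1) i = a k i * (θ * ((k : ℝ) + 1 - (i : ℝ)) / (k : ℝ))
        + a k (i - 1) * (1 - θ * ((k : ℝ) + 1 - (i : ℝ) + 1) / (k : ℝ))) :
    ∀ c ∈ Set.Icc (0 : ℝ) 1,
      a d 1 * (1 - c) ^ (d - 1)
        + ∑ i ∈ Finset.Icc 2 d,
            a d i * ((Nat.factorial (d - 1) : ℝ) /
                ((Nat.factorial (d - i) : ℝ) * (Nat.factorial (i - 2) : ℝ)))
              * ∫ x in (c ^ θ)..1,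
                  (1 - c / x ^ p) ^ (d - 1) * x ^ (d - i) * (1 - x) ^ (i - 2)
      = (1 - c ^ θ) ^ (d - 1) := by
  intro c hc
  obtain ⟨hc0, hc1⟩ := hc
  obtain ⟨k, rfl⟩ : ∃ k, d = k + 1 := ⟨d-1, by omega⟩
  have hk : 1 ≤ k := by omega
  simp only [Nat.add_sub_cancel]
  have hconv : ∀ i ∈ Icc 2 (k+1),
      a (k+1) i * ((Nat.factorial k : ℝ) /
          ((Nat.factorial (k+1-i) : ℝ) * (Nat.factorial (i-2) : ℝ)))
        * ∫ x in (c ^ θ)..1, (1 - c / x ^ p) ^ k * x ^ (k+1-i) * (1 - x) ^ (i-2)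
      = a (k+1) i * ((k:ℝ) * (((k-1).choose (k+1-i) : ℕ) : ℝ))
        * II p θ c k (k+1-i) (i-2) := by
    intro i hi
    rw [Finset.mem_Icc] at hi
    rw [factCo hk (k+1-i) (i-2) (by omega)]
    rfl
  rw [Finset.sum_congr rfl hconv]
  exact finLem hp hθ hc0 hc1 a hzero htop hinit hrec k hk
end

section
/- Fix integers d ≥ 2 and 1 ≤ k < d, and a real number p ≥ 1 with θ = 1/p. Let the coefficients a_i^{(k)} be defined by the stated recursion. Then for every c ∈ [0,1]: Σ_{i=1}^{k} a_i^{(k)} · ((d-1)!/((k-i)!·(d-k-2+i)!)) · ∫_{c^θ}^{1} (1 - c/x^p)^{k-1} · x^{k-i} (1-x)^{d-k-2+i} dx = (1 - c^θ)^{d-1}. (That is, the mixture F_d^k = Σ_{i=1}^k a_i^{(k)} Beta(k+1-i, d-k-1+i) satisfies the Williamson-type integral equation ∫_{c^θ}^1 (1 - c/x^p)^{k-1} dF_d^k(x) = (1-c^θ)^{d-1}.) -/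
open MeasureTheory Finset
open intervalIntegral


lemma beta_nat : ∀ (n m : ℕ), ∫ x in (0:ℝ)..1, x ^ m * (1 - x) ^ n
    = (Nat.factorial m * Nat.factorial n : ℝ) / Nat.factorial (m + n + 1) := by
  intro n
  induction n with
  | zero =>
    intro m
    simp [integral_pow, Nat.factorial_succ]
    have : (Nat.factorial m : ℝ) ≠ 0 := Nat.cast_ne_zero.2 m.factorial_ne_zero
    field_simp
  | succ n ih =>
    intro m
    have hIBP : ∫ x in (0:ℝ)..1,
        (((m:ℝ)+1) * (x ^ m * (1-x)^(n+1)) - ((n:ℝ)+1) * (x^(m+1) * (1-x)^n)) = 0 := by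
      have : ∀ x ∈ Set.uIcc (0:ℝ) 1, HasDerivAt (fun x : ℝ => x^(m+1) * (1-x)^(n+1))
          ((((m:ℝ)+1) * (x ^ m * (1-x)^(n+1)) - ((n:ℝ)+1) * (x^(m+1) * (1-x)^n))) x := by
        intro x _
        have h1 : HasDerivAt (fun x : ℝ => x^(m+1)) (((m:ℝ)+1) * x ^ m) x := by
          simpa using hasDerivAt_pow (m+1) x
        have h2 : HasDerivAt (fun x : ℝ => (1-x)^(n+1)) (-(((n:ℝ)+1) * (1-x)^n)) x := by
          have := (((hasDerivAt_id x).const_sub 1).pow (n+1))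
          simp at this; exact this
        have := h1.mul h2
        convert this using 1
        · rfl
        · rfl
        · rfl
        ring
      rw [integral_eq_sub_of_hasDerivAt this (by apply Continuous.intervalIntegrable; continuity)]
      norm_num
    have hsplit : ((m:ℝ)+1) * ∫ x in (0:ℝ)..1, x ^ m * (1-x)^(n+1)
        = ((n:ℝ)+1) * ∫ x in (0:ℝ)..1, x^(m+1) * (1-x)^n := by
      have i1 : IntervalIntegrable (fun x : ℝ => x ^ m * (1-x)^(n+1)) volume 0 1 := by
        apply Continuous.intervalIntegrable; continuity
      have i2 : IntervalIntegrable (fun x : ℝ => x ^ (m+1) * (1-x)^n) volume 0 1 := by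
        apply Continuous.intervalIntegrable; continuity
      rw [← intervalIntegral.integral_const_mul, ← intervalIntegral.integral_const_mul]
      rw [integral_sub (i1.const_mul _) (i2.const_mul _)] at hIBP
      linarith [hIBP]
    have hih := ih (m+1)
    rw [hih] at hsplit
    have hm1 : ((m:ℝ)+1) ≠ 0 := by positivity
    have hname : ∫ x in (0:ℝ)..1, x ^ m * (1-x)^(n+1)
        = (((n:ℝ)+1) * (((m+1).factorial : ℝ) * (n.factorial : ℝ) / ((m+1+n+1).factorial : ℝ))) / ((m:ℝ)+1) := by
      rw [eq_div_iff hm1]; linarith [hsplit]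
    rw [hname, show m + (n+1) + 1 = m+1+n+1 by omega,
      show ((m+1).factorial : ℝ) = ((m:ℝ)+1) * m.factorial by
        push_cast [Nat.factorial_succ]; ring,
      show (((n+1).factorial : ℕ) : ℝ) = ((n:ℝ)+1) * n.factorial by
        push_cast [Nat.factorial_succ]; ring]
    have h2 : ((m+1+n+1).factorial : ℝ) ≠ 0 := Nat.cast_ne_zero.2 (Nat.factorial_ne_zero _)
    field_simp

lemma star_ibp (p c : ℝ) (hp : 1 ≤ p) (hc0 : 0 < c) (hc1 : c ≤ 1)
    (j m n : ℕ) (hj : 1 ≤ j) (hn : 1 ≤ n) :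
    (j : ℝ) * p * (∫ x in (c ^ (1/p))..1, (1 - c/x^p)^(j-1) * x^m * (1-x)^n)
      + ((m:ℝ)+1) * (∫ x in (c ^ (1/p))..1, (1 - c/x^p)^j * x^m * (1-x)^n)
    = (j : ℝ) * p * (∫ x in (c ^ (1/p))..1, (1 - c/x^p)^j * x^m * (1-x)^n)
      + (n:ℝ) * (∫ x in (c ^ (1/p))..1, (1 - c/x^p)^j * x^(m+1) * (1-x)^(n-1)) := by
  have hp0 : 0 < p := lt_of_lt_of_le one_pos hp
  set t : ℝ := c ^ (1/p) with ht
  have ht0 : 0 < t := Real.rpow_pos_of_pos hc0 _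
  have ht1 : t ≤ 1 := Real.rpow_le_one hc0.le hc1 (by positivity)
  have huIcc : Set.uIcc t 1 = Set.Icc t 1 := Set.uIcc_of_le ht1
  have hcont : ∀ (a b e : ℕ),
      ContinuousOn (fun x : ℝ => (1 - c/x^p)^a * x^b * (1-x)^e) (Set.Icc t 1) := by
    intro a b e
    apply ContinuousOn.mul
    apply ContinuousOn.mul
    · apply ContinuousOn.pow
      apply ContinuousOn.sub continuousOn_const
      apply ContinuousOn.div continuousOn_const
      · intro x hx
        exact (Real.continuousAt_rpow_const x p (Or.inr hp0.le)).continuousWithinAt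
      · intro x hx
        exact (Real.rpow_pos_of_pos (lt_of_lt_of_le ht0 hx.1) p).ne'
    · exact (continuous_pow b).continuousOn
    · exact ((continuous_const.sub continuous_id).pow e).continuousOn
  have hint : ∀ (a b e : ℕ),
      IntervalIntegrable (fun x : ℝ => (1 - c/x^p)^a * x^b * (1-x)^e) volume t 1 := by
    intro a b e
    exact ((hcont a b e).mono (by rw [huIcc])).intervalIntegrable
  set f' : ℝ → ℝ := fun x =>
    (j:ℝ)*p*((1 - c/x^p)^(j-1) * x^m * (1-x)^n) - (j:ℝ)*p*((1 - c/x^p)^j * x^m * (1-x)^n)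
      + (((m:ℝ)+1)*((1 - c/x^p)^j * x^m * (1-x)^n)
        - (n:ℝ)*((1 - c/x^p)^j * x^(m+1) * (1-x)^(n-1))) with hf'
  have hderiv : ∀ x ∈ Set.uIcc t 1,
      HasDerivAt (fun x : ℝ => (1 - c/x^p)^j * x^(m+1) * (1-x)^n) (f' x) x := by
    intro x hx
    rw [huIcc] at hx
    have hx0 : 0 < x := lt_of_lt_of_le ht0 hx.1
    have hxp : x ^ p ≠ 0 := (Real.rpow_pos_of_pos hx0 p).ne'
    have h1 : HasDerivAt (fun x : ℝ => x ^ p) (p * x ^ (p-1)) x :=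
      Real.hasDerivAt_rpow_const (Or.inl hx0.ne')
    have h2 : HasDerivAt (fun x : ℝ => 1 - c / x ^ p)
        (-((0 * x ^ p - c * (p * x ^ (p-1))) / (x ^ p) ^ 2)) x :=
      ((hasDerivAt_const x c).div h1 hxp).const_sub 1
    have h3 := (h2.pow j).mul (hasDerivAt_pow (m+1) x)
    have h4 := h3.mul (((hasDerivAt_id x).const_sub 1).pow n)
    have hxp1 : x ^ (p-1) = x ^ p / x := by
      rw [Real.rpow_sub hx0, Real.rpow_one]
    have hu : (1 - c/x^p)^(j-1) * (1 - c/x^p) = (1 - c/x^p)^j := by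
      rw [← pow_succ, Nat.sub_add_cancel hj]
    have e1 : -((0 * x ^ p - c * (p * x ^ (p-1))) / (x ^ p) ^ 2) = p * (c / x^p) / x := by
      rw [hxp1]
      field_simp
      ring
    rw [e1] at h4
    convert h4 using 1
    · rfl
    · rfl
    · rfl
    rw [hf']
    simp only [Nat.add_sub_cancel, Nat.cast_add, Nat.cast_one, id_eq, Pi.pow_apply, Pi.mul_apply]
    rw [← hu]
    field_simp
    ring
  have hF1 : ((1 - c/(1:ℝ)^p)^j * (1:ℝ)^(m+1) * (1-(1:ℝ))^n) = 0 := by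
    rw [sub_self, zero_pow (by omega)]
    ring
  have hFt : ((1 - c/t^p)^j * t^(m+1) * (1-t)^n) = 0 := by
    have : t ^ p = c := by
      rw [ht, ← Real.rpow_mul hc0.le, one_div_mul_cancel hp0.ne', Real.rpow_one]
    rw [this, div_self hc0.ne', sub_self, zero_pow (by omega)]
    ring
  have hkey : ∫ x in t..1, f' x = 0 := by
    rw [integral_eq_sub_of_hasDerivAt hderiv ?_]
    · rw [hF1, hFt, sub_zero]
    · apply ContinuousOn.intervalIntegrable
      rw [huIcc, hf']
      apply ContinuousOn.add
      apply ContinuousOn.sub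
      · exact (hcont (j-1) m n).const_smul ((j:ℝ)*p) |>.congr (fun x _ => by simp [smul_eq_mul])
      · exact (hcont j m n).const_smul ((j:ℝ)*p) |>.congr (fun x _ => by simp [smul_eq_mul])
      apply ContinuousOn.sub
      · exact (hcont j m n).const_smul ((m:ℝ)+1) |>.congr (fun x _ => by simp [smul_eq_mul])
      · exact (hcont j (m+1) (n-1)).const_smul (n:ℝ) |>.congr (fun x _ => by simp [smul_eq_mul])
  rw [hf'] at hkey
  rw [integral_add (((hint (j-1) m n).const_mul _).sub ((hint j m n).const_mul _))
      (((hint j m n).const_mul _).sub ((hint j (m+1) (n-1)).const_mul _)),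
    integral_sub ((hint (j-1) m n).const_mul _) ((hint j m n).const_mul _),
    integral_sub ((hint j m n).const_mul _) ((hint j (m+1) (n-1)).const_mul _),
    intervalIntegral.integral_const_mul, intervalIntegral.integral_const_mul, intervalIntegral.integral_const_mul, intervalIntegral.integral_const_mul] at hkey
  linarith [hkey]

lemma sum_Icc_one (n : ℕ) (f : ℕ → ℝ) :
    ∑ i ∈ Finset.Icc 1 n, f i = ∑ i ∈ Finset.range n, f (1 + i) := by
  rw [← Finset.Ico_add_one_right_eq_Icc, Finset.sum_Ico_eq_sum_range]
  simp

lemma sum_a_one (θ : ℝ) (a : ℕ → ℕ → ℝ)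
    (hzero : ∀ m, a m 0 = 0) (htop : ∀ m, a m (m + 1) = 0) (hinit : a 1 1 = 1)
    (hrec : ∀ m i, 1 ≤ m → 1 ≤ i → i ≤ m + 1 →
      a (m + 1) i = a m i * (θ * ((m : ℝ) + 1 - (i : ℝ)) / (m : ℝ))
        + a m (i - 1) * (1 - θ * ((m : ℝ) + 1 - (i : ℝ) + 1) / (m : ℝ))) :
    ∀ k, 1 ≤ k → ∑ i ∈ Finset.Icc 1 k, a k i = 1 := by
  intro k hk
  induction k, hk using Nat.le_induction with
  | base => simpa using hinit
  | succ k hk ih =>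
    rw [sum_Icc_one]
    have hsplit : ∀ i ∈ Finset.range (k+1), a (k+1) (1+i)
        = a k (1+i) * (θ * ((k:ℝ) - i) / k) + a k i * (1 - θ * ((k:ℝ) - i + 1) / k) := by
      intro i hi
      have hik : i < k + 1 := Finset.mem_range.mp hi
      rw [hrec k (1+i) hk (by omega) (by omega), show (1+i) - 1 = i by omega]
      push_cast
      ring_nf
    rw [Finset.sum_congr rfl hsplit, Finset.sum_add_distrib, Finset.sum_range_succ,
      Finset.sum_range_succ']
    rw [show a k (1+k) = 0 by rw [add_comm]; exact htop k, hzero k]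
    rw [zero_mul, add_zero, zero_mul, add_zero, ← Finset.sum_add_distrib]
    rw [sum_Icc_one] at ih
    have hterm : ∀ i ∈ Finset.range k,
        a k (1+i) * (θ * ((k:ℝ) - i) / k) + a k (i+1) * (1 - θ * ((k:ℝ) - ↑(i+1) + 1) / k)
          = a k (1+i) := by
      intro i hi
      rw [show i + 1 = 1 + i by omega]
      push_cast
      ring
    rw [Finset.sum_congr rfl hterm, ih]
lemma key_pos (d : ℕ) (hd : 2 ≤ d) (p θ : ℝ) (hp : 1 ≤ p) (hθ : θ = 1/p)
    (a : ℕ → ℕ → ℝ)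
    (hzero : ∀ m, a m 0 = 0) (htop : ∀ m, a m (m + 1) = 0) (hinit : a 1 1 = 1)
    (hrec : ∀ m i, 1 ≤ m → 1 ≤ i → i ≤ m + 1 →
      a (m + 1) i = a m i * (θ * ((m : ℝ) + 1 - (i : ℝ)) / (m : ℝ))
        + a m (i - 1) * (1 - θ * ((m : ℝ) + 1 - (i : ℝ) + 1) / (m : ℝ)))
    (c : ℝ) (hc0 : 0 < c) (hc1 : c ≤ 1) :
    ∀ k, 1 ≤ k → k ≤ d - 1 →
      ∑ i ∈ Finset.Icc 1 k,
          a k i * ((Nat.factorial (d - 1) : ℝ) /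
              ((Nat.factorial (k - i) : ℝ) * (Nat.factorial (d + i - k - 2) : ℝ)))
            * ∫ x in (c ^ θ)..1,
                (1 - c / x ^ p) ^ (k - 1) * x ^ (k - i) * (1 - x) ^ (d + i - k - 2)
      = (1 - c ^ θ) ^ (d - 1) := by
  subst hθ
  have hp0 : 0 < p := lt_of_lt_of_le one_pos hp
  intro k hk1
  induction k, hk1 using Nat.le_induction with
  | base =>
    intro _
    rw [Finset.Icc_self, Finset.sum_singleton, hinit]
    simp only [Nat.sub_self, pow_zero, one_mul, Nat.factorial_zero, Nat.cast_one,
      show d + 1 - 1 - 2 = d - 2 by omega]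
    have h := intervalIntegral.integral_comp_sub_left (a := c ^ (1/p)) (b := 1)
      (fun y : ℝ => y ^ (d-2)) 1
    simp only [sub_self] at h
    rw [h, integral_pow, show (d-2)+1 = d-1 by omega, zero_pow (by omega : d - 1 ≠ 0)]
    have hf : ((d-1).factorial : ℝ) = (((d-2):ℕ) + 1 : ℝ) * ((d-2).factorial : ℝ) := by
      rw [show d - 1 = (d-2) + 1 by omega, Nat.factorial_succ]
      push_cast
      ring
    rw [hf, sub_zero]
    have h1 : ((d-2).factorial : ℝ) ≠ 0 := Nat.cast_ne_zero.2 (Nat.factorial_ne_zero _)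
    have h2 : (((d-2):ℕ) + 1 : ℝ) ≠ 0 := by positivity
    have h3 : (d:ℝ) - 1 ≠ 0 := by
      have : (2:ℝ) ≤ (d:ℝ) := by exact_mod_cast hd
      linarith
    rw [mul_div_assoc, div_self h1, mul_one, mul_comm, div_mul_cancel₀ _ h2]
  | succ k hk ih =>
    intro hkd1
    have ihv := ih (by omega)
    rw [sum_Icc_one] at ihv
    rw [sum_Icc_one]
    have hsplit : ∀ i ∈ Finset.range (k+1),
        a (k+1) (1+i) * ((Nat.factorial (d - 1) : ℝ) /
            ((Nat.factorial (k+1-(1+i)) : ℝ) * (Nat.factorial (d+(1+i)-(k+1)-2) : ℝ)))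
          * (∫ x in (c ^ (1/p))..1,
              (1 - c / x ^ p) ^ (k+1-1) * x ^ (k+1-(1+i)) * (1 - x) ^ (d+(1+i)-(k+1)-2))
        = (a k (1+i) * ((1/p) * ((k:ℝ) - i) / k)) * ((Nat.factorial (d - 1) : ℝ) /
            ((Nat.factorial (k-i) : ℝ) * (Nat.factorial (d+i-k-2) : ℝ)))
          * (∫ x in (c ^ (1/p))..1,
              (1 - c / x ^ p) ^ k * x ^ (k-i) * (1 - x) ^ (d+i-k-2))
        + (a k i * (1 - (1/p) * ((k:ℝ) - i + 1) / k)) * ((Nat.factorial (d - 1) : ℝ) /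
            ((Nat.factorial (k-i) : ℝ) * (Nat.factorial (d+i-k-2) : ℝ)))
          * (∫ x in (c ^ (1/p))..1,
              (1 - c / x ^ p) ^ k * x ^ (k-i) * (1 - x) ^ (d+i-k-2)) := by
      intro i hi
      have hik : i < k + 1 := Finset.mem_range.mp hi
      rw [show k+1-(1+i) = k-i by omega, show d+(1+i)-(k+1)-2 = d+i-k-2 by omega,
        show k+1-1 = k by omega,
        hrec k (1+i) hk (by omega) (by omega), show (1+i)-1 = i by omega]
      push_cast
      ring
    rw [Finset.sum_congr rfl hsplit, Finset.sum_add_distrib, Finset.sum_range_succ,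
      Finset.sum_range_succ']
    rw [show a k (1+k) = 0 by rw [add_comm]; exact htop k, hzero k]
    simp only [zero_mul, add_zero]
    rw [← Finset.sum_add_distrib, ← ihv]
    apply Finset.sum_congr rfl
    intro i hi
    have hik : i < k := Finset.mem_range.mp hi
    have hpnz : p ≠ 0 := hp0.ne'
    have hknz : ((k:ℝ)) ≠ 0 := Nat.cast_ne_zero.2 (by omega)
    rw [show i+1 = 1+i by omega]
    rw [show k-(1+i) = k-1-i by omega, show d+(1+i)-k-2 = (d+i-k-2)+1 by omega,
      show k-i = (k-1-i)+1 by omega]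
    have hfa : ((((k-1-i)+1).factorial : ℕ) : ℝ)
        = (((k-1-i:ℕ):ℝ)+1) * ((k-1-i).factorial : ℝ) := by
      rw [Nat.factorial_succ]; push_cast; ring
    have hfb : ((((d+i-k-2)+1).factorial : ℕ) : ℝ)
        = (((d+i-k-2:ℕ):ℝ)+1) * ((d+i-k-2).factorial : ℝ) := by
      rw [Nat.factorial_succ]; push_cast; ring
    have hm : ((k-1-i : ℕ):ℝ) = (k:ℝ) - 1 - (i:ℝ) := by
      rw [Nat.cast_sub (by omega), Nat.cast_sub (by omega)]
      push_cast; ring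
    rw [hfa, hfb, hm]
    set I0 := ∫ x in (c^(1/p))..1, (1 - c/x^p)^(k-1) * x^(k-1-i) * (1-x)^((d+i-k-2)+1) with hI0d
    set I1 := ∫ x in (c^(1/p))..1, (1 - c/x^p)^k * x^(k-1-i) * (1-x)^((d+i-k-2)+1) with hI1d
    set I2 := ∫ x in (c^(1/p))..1, (1 - c/x^p)^k * x^((k-1-i)+1) * (1-x)^(d+i-k-2) with hI2d
    have hI0 : I0 = I1 + 1/((k:ℝ)*p) * ((((d+i-k-2:ℕ):ℝ)+1) * I2 - ((k:ℝ)-1-(i:ℝ)+1) * I1) := by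
      have hstar := star_ibp p c hp hc0 hc1 k (k-1-i) ((d+i-k-2)+1) hk (by omega)
      simp only [Nat.add_sub_cancel] at hstar
      push_cast at hstar
      rw [hm] at hstar
      rw [hI0d, hI1d, hI2d]
      field_simp
      linear_combination hstar
    rw [hI0]
    simp only [Nat.cast_add, Nat.cast_one]
    have hKi : ((k:ℝ) - 1 - (i:ℝ) + 1) ≠ 0 := by
      have : (i:ℝ) < (k:ℝ) := by exact_mod_cast hik
      intro h; linarith
    have hFA : ((k-1-i).factorial : ℝ) ≠ 0 := Nat.cast_ne_zero.2 (Nat.factorial_ne_zero _)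
    have hFB : ((d+i-k-2).factorial : ℝ) ≠ 0 := Nat.cast_ne_zero.2 (Nat.factorial_ne_zero _)
    have hN1 : ((d+i-k-2:ℕ):ℝ) + 1 ≠ 0 := by positivity
    field_simp
    ring
/-- For `1 ≤ k < d`, the mixture `F_d^k = Σ_{i=1}^k a_i^{(k)} Beta(k+1-i, d-k-1+i)`
satisfies the Williamson-type integral equation
`∫_{c^θ}^1 (1 - c/x^p)^{k-1} dF_d^k(x) = (1-c^θ)^{d-1}`. -/
theorem williamson_transform_of_mixture_k
    (d k : ℕ) (hd : 2 ≤ d) (hk1 : 1 ≤ k) (hkd : k < d)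
    (p θ : ℝ) (hp : 1 ≤ p) (hθ : θ = 1 / p)
    (a : ℕ → ℕ → ℝ)
    (hzero : ∀ m, a m 0 = 0)
    (htop : ∀ m, a m (m + 1) = 0)
    (hinit : a 1 1 = 1)
    (hrec : ∀ m i, 1 ≤ m → 1 ≤ i → i ≤ m + 1 →
      a (m + 1) i = a m i * (θ * ((m : ℝ) + 1 - (i : ℝ)) / (m : ℝ))
        + a m (i - 1) * (1 - θ * ((m : ℝ) + 1 - (i : ℝ) + 1) / (m : ℝ))) :
    ∀ c ∈ Set.Icc (0 : ℝ) 1,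
      ∑ i ∈ Finset.Icc 1 k,
          a k i * ((Nat.factorial (d - 1) : ℝ) /
              ((Nat.factorial (k - i) : ℝ) * (Nat.factorial (d + i - k - 2) : ℝ)))
            * ∫ x in (c ^ θ)..1,
                (1 - c / x ^ p) ^ (k - 1) * x ^ (k - i) * (1 - x) ^ (d + i - k - 2)
      = (1 - c ^ θ) ^ (d - 1) := by
  subst hθ
  have hp0 : 0 < p := lt_of_lt_of_le one_pos hp
  intro c hc
  obtain ⟨hc0, hc1⟩ := hc
  rcases eq_or_lt_of_le hc0 with h0 | h0
  · -- c = 0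
    subst h0
    have hpz : (1:ℝ)/p ≠ 0 := by positivity
    rw [Real.zero_rpow hpz]
    simp only [zero_div, sub_zero, one_pow, one_mul]
    have hterm : ∀ i ∈ Finset.Icc 1 k,
        a k i * ((Nat.factorial (d - 1) : ℝ) /
            ((Nat.factorial (k - i) : ℝ) * (Nat.factorial (d + i - k - 2) : ℝ)))
          * (∫ x in (0:ℝ)..1, x ^ (k - i) * (1 - x) ^ (d + i - k - 2)) = a k i := by
      intro i hi
      obtain ⟨hi1, hi2⟩ := Finset.mem_Icc.mp hi
      rw [beta_nat, show (k-i) + (d+i-k-2) + 1 = d - 1 by omega]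
      have h1 : ((d-1).factorial : ℝ) ≠ 0 := Nat.cast_ne_zero.2 (Nat.factorial_ne_zero _)
      have h2 : ((k-i).factorial : ℝ) ≠ 0 := Nat.cast_ne_zero.2 (Nat.factorial_ne_zero _)
      have h3 : ((d+i-k-2).factorial : ℝ) ≠ 0 := Nat.cast_ne_zero.2 (Nat.factorial_ne_zero _)
      field_simp
    rw [Finset.sum_congr rfl hterm, sum_a_one (1/p) a hzero htop hinit hrec k hk1]
  · exact key_pos d hd p (1/p) hp rfl a hzero htop hinit hrec c h0 hc1 k hk1 (by omega)
end

section
/- Fix a real number p ≥ 1 and set θ = 1/p, and let the coefficients a_i^{(k)} be defined by the stated recursion. Then for every integer k ≥ 1 and every 1 ≤ i ≤ k one has a_i^{(k)} ≥ 0, and Σ_{i=1}^{k} a_i^{(k)} = 1; i.e., (a_1^{(k)},…,a_k^{(k)}) lies in the standard unit simplex. -/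
open Finset

/-- The coefficients `a_i^{(k)}` defined by the recursion are nonnegative and
sum to one, i.e. `(a_1^{(k)},…,a_k^{(k)})` lies in the standard unit simplex. -/
theorem coefficients_in_simplex
    (p θ : ℝ) (hp : 1 ≤ p) (hθ : θ = 1 / p)
    (a : ℕ → ℕ → ℝ)
    (hzero : ∀ m, a m 0 = 0)
    (htop : ∀ m, a m (m + 1) = 0)
    (hinit : a 1 1 = 1)
    (hrec : ∀ m i, 1 ≤ m → 1 ≤ i → i ≤ m + 1 →
      a (m + 1) i = a m i * (θ * ((m : ℝ) + 1 - (i : ℝ)) / (m : ℝ))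
        + a m (i - 1) * (1 - θ * ((m : ℝ) + 1 - (i : ℝ) + 1) / (m : ℝ))) :
    ∀ k : ℕ, 1 ≤ k →
      (∀ i : ℕ, 1 ≤ i → i ≤ k → 0 ≤ a k i) ∧ ∑ i ∈ Finset.Icc 1 k, a k i = 1 := by
  have hp0 : (0:ℝ) < p := lt_of_lt_of_le one_pos hp
  have hθ0 : 0 < θ := by rw [hθ]; positivity
  have hθ1 : θ ≤ 1 := by rw [hθ]; rw [div_le_one hp0]; exact hp
  intro k hk
  induction k with
  | zero => omega
  | succ m ih =>
    rcases Nat.eq_zero_or_pos m with hm0 | hm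
    · subst hm0
      constructor
      · intro i hi1 him
        interval_cases i
        simp [hinit]
      · simp [hinit]
    · obtain ⟨hnn, hsum⟩ := ih hm
      have hmR : (0:ℝ) < m := by exact_mod_cast hm
      constructor
      · intro i hi1 him
        rw [hrec m i hm hi1 him]
        have hiR : (i:ℝ) ≤ (m:ℝ) + 1 := by exact_mod_cast him
        have t1 : 0 ≤ a m i * (θ * ((m : ℝ) + 1 - (i : ℝ)) / (m : ℝ)) := by
          apply mul_nonneg
          · rcases Nat.lt_or_ge i (m+1) with h | h
            · exact hnn i hi1 (by omega)
            · have : i = m + 1 := by omega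
              rw [this, htop]
          · apply div_nonneg _ hmR.le
            apply mul_nonneg hθ0.le
            linarith
        have t2 : 0 ≤ a m (i - 1) * (1 - θ * ((m : ℝ) + 1 - (i : ℝ) + 1) / (m : ℝ)) := by
          rcases Nat.lt_or_ge i 2 with h | h
          · have : i = 1 := by omega
            simp [this, hzero]
          · apply mul_nonneg (hnn (i-1) (by omega) (by omega))
            have hi2 : (2:ℝ) ≤ (i:ℝ) := by exact_mod_cast h
            have hx : θ * ((m : ℝ) + 1 - (i : ℝ) + 1) ≤ (m:ℝ) := by
              calc θ * ((m : ℝ) + 1 - (i : ℝ) + 1)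
                  ≤ 1 * ((m : ℝ) + 1 - (i : ℝ) + 1) :=
                    mul_le_mul_of_nonneg_right hθ1 (by linarith)
                _ ≤ (m:ℝ) := by linarith
            have := (div_le_one hmR).mpr hx
            linarith
        exact add_nonneg t1 t2
      · have key : ∀ i ∈ Finset.Icc 1 (m+1),
            a (m+1) i = a m i * (θ * ((m : ℝ) + 1 - (i : ℝ)) / (m : ℝ))
              + a m (i - 1) * (1 - θ * ((m : ℝ) + 1 - (i : ℝ) + 1) / (m : ℝ)) := by
          intro i hi
          obtain ⟨h1, h2⟩ := Finset.mem_Icc.mp hi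
          exact hrec m i hm h1 h2
        rw [Finset.sum_congr rfl key, Finset.sum_add_distrib]
        have e1 : ∑ i ∈ Finset.Icc 1 (m+1), a m i * (θ * ((m : ℝ) + 1 - (i : ℝ)) / (m : ℝ))
            = ∑ i ∈ Finset.Icc 1 m, a m i * (θ * ((m : ℝ) + 1 - (i : ℝ)) / (m : ℝ)) := by
          rw [Finset.sum_Icc_succ_top (by omega : 1 ≤ m + 1)]
          rw [htop]
          ring
        have himg : Finset.Icc 1 (m+1) = (Finset.Icc 0 m).image (· + 1) := by
          ext x
          simp only [Finset.mem_Icc, Finset.mem_image]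
          constructor
          · rintro ⟨h1, h2⟩; exact ⟨x - 1, by omega, by omega⟩
          · rintro ⟨j, hj, rfl⟩; omega
        have e2 : ∑ i ∈ Finset.Icc 1 (m+1),
              a m (i - 1) * (1 - θ * ((m : ℝ) + 1 - (i : ℝ) + 1) / (m : ℝ))
            = ∑ j ∈ Finset.Icc 1 m, a m j * (1 - θ * ((m : ℝ) + 1 - (j : ℝ)) / (m : ℝ)) := by
          rw [himg, Finset.sum_image (by intro x _ y _ h; simp only at h; omega)]
          have h0 : Finset.Icc 0 m = insert 0 (Finset.Icc 1 m) := by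
            ext x; simp [Finset.mem_Icc]; omega
          rw [h0, Finset.sum_insert (by simp)]
          simp only [Nat.add_sub_cancel, hzero, zero_mul, zero_add]
          apply Finset.sum_congr rfl
          intro j hj
          push_cast
          ring_nf
        rw [e1, e2, ← Finset.sum_add_distrib]
        have : ∑ i ∈ Finset.Icc 1 m,
            (a m i * (θ * ((m : ℝ) + 1 - (i : ℝ)) / (m : ℝ))
              + a m i * (1 - θ * ((m : ℝ) + 1 - (i : ℝ)) / (m : ℝ)))
            = ∑ i ∈ Finset.Icc 1 m, a m i :=
          Finset.sum_congr rfl fun i _ => by ring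
        rw [this, hsum]
end

section
/- Fix an integer d ≥ 2 and a real number p ≥ 1, and set θ = 1/p. The function φ(x) = (1 - x^θ)_+^{d-1} (i.e., φ(x) = (1-x^θ)^{d-1} for x ∈ (0,1] and φ(x) = 0 for x ≥ 1) is d-monotone on (0,∞): φ is (d-2)-times differentiable on (0,∞), and for every k = 0,1,…,d-2 the function x ↦ (-1)^k φ^{(k)}(x) is nonnegative, nonincreasing and convex on (0,∞). -/
open Set Finset

open Set Finset

/-- coefficients of the k-th derivative expansion -/
def coefA (θ dr : ℝ) : ℕ → ℕ → ℝ
  | 0, 0 => 1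
  | 0, _+1 => 0
  | k+1, 0 => (-(k:ℝ)) * coefA θ dr k 0
  | k+1, j+1 => (((j:ℝ)+1)*θ - (k:ℝ)) * coefA θ dr k (j+1)
      - (dr - ((j:ℝ)+1))*θ * coefA θ dr k j

lemma coefA_vanish (θ dr : ℝ) : ∀ k j, k < j → coefA θ dr k j = 0 := by
  intro k
  induction k with
  | zero => intro j hj; match j, hj with | j+1, _ => rfl
  | succ k ih =>
    intro j hj
    match j, hj with
    | j+1, hj =>
      have h1 : coefA θ dr k (j+1) = 0 := ih _ (by omega)
      have h2 : coefA θ dr k j = 0 := ih _ (by omega)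
      show (((j:ℝ)+1)*θ - (k:ℝ)) * coefA θ dr k (j+1)
        - (dr - ((j:ℝ)+1))*θ * coefA θ dr k j = 0
      rw [h1, h2]; ring

lemma coefA_sign (θ dr : ℝ) (hθ0 : 0 ≤ θ) (hθ1 : θ ≤ 1) :
    ∀ k : ℕ, (k:ℝ) ≤ dr → ∀ j, 0 ≤ (-1:ℝ)^k * coefA θ dr k j := by
  intro k
  induction k with
  | zero =>
    intro _ j
    cases j with
    | zero => norm_num [coefA]
    | succ j => show (0:ℝ) ≤ (-1)^0 * 0; norm_num
  | succ k ih =>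
    intro hk j
    have hk' : (k:ℝ) ≤ dr := by push_cast at hk ⊢; linarith
    cases j with
    | zero =>
      have h : (-1:ℝ)^(k+1) * coefA θ dr (k+1) 0
          = (k:ℝ) * ((-1:ℝ)^k * coefA θ dr k 0) := by
        show (-1:ℝ)^(k+1) * ((-(k:ℝ)) * coefA θ dr k 0) = _
        rw [pow_succ]; ring
      rw [h]
      exact mul_nonneg (Nat.cast_nonneg k) (ih hk' 0)
    | succ j =>
      have h : (-1:ℝ)^(k+1) * coefA θ dr (k+1) (j+1)
          = ((k:ℝ) - ((j:ℝ)+1)*θ) * ((-1:ℝ)^k * coefA θ dr k (j+1))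
            + (dr - ((j:ℝ)+1))*θ * ((-1:ℝ)^k * coefA θ dr k j) := by
        show (-1:ℝ)^(k+1) * ((((j:ℝ)+1)*θ - (k:ℝ)) * coefA θ dr k (j+1)
          - (dr - ((j:ℝ)+1))*θ * coefA θ dr k j) = _
        rw [pow_succ]; ring
      rw [h]
      have h1 : 0 ≤ ((k:ℝ) - ((j:ℝ)+1)*θ) * ((-1:ℝ)^k * coefA θ dr k (j+1)) := by
        rcases le_or_gt (j+1) k with hle | hlt
        · refine mul_nonneg ?_ (ih hk' _)
          have : ((j:ℝ)+1) ≤ (k:ℝ) := by exact_mod_cast hle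
          nlinarith
        · rw [coefA_vanish θ dr k (j+1) hlt]; simp
      have h2 : 0 ≤ (dr - ((j:ℝ)+1))*θ * ((-1:ℝ)^k * coefA θ dr k j) := by
        rcases le_or_gt (j+1) (k+1) with hle | hlt
        · refine mul_nonneg (mul_nonneg ?_ hθ0) (ih hk' _)
          have : ((j:ℝ)+1) ≤ ((k:ℕ):ℝ)+1 := by exact_mod_cast hle
          push_cast at hk; linarith
        · rw [coefA_vanish θ dr k j (by omega)]; simp
      linarith

lemma hasDerivAt_maxpow (m : ℕ) (hm : 2 ≤ m) (t : ℝ) :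
    HasDerivAt (fun u : ℝ => (max u 0) ^ m) (m * (max t 0) ^ (m - 1)) t := by
  rcases lt_trichotomy t 0 with ht | rfl | ht
  · have hev : (fun u : ℝ => (max u 0) ^ m) =ᶠ[nhds t] fun _ => (0:ℝ) := by
      filter_upwards [Iio_mem_nhds ht] with u hu
      rw [max_eq_right (le_of_lt hu)]
      exact zero_pow (by omega)
    have h0 : HasDerivAt (fun _ : ℝ => (0:ℝ)) 0 t := hasDerivAt_const t 0
    have := h0.congr_of_eventuallyEq hev
    refine this.congr_deriv ?_
    rw [max_eq_right (le_of_lt ht), zero_pow (by omega : m - 1 ≠ 0)]; ring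
  · rw [hasDerivAt_iff_tendsto_slope]
    have hval : (m:ℝ) * (max (0:ℝ) 0) ^ (m-1) = 0 := by
      simp [zero_pow (by omega : m - 1 ≠ 0)]
    rw [hval]
    refine squeeze_zero_norm' (a := fun u : ℝ => |u| ^ (m-1)) ?_ ?_
    · filter_upwards [self_mem_nhdsWithin] with u hu
      have hu0 : (u : ℝ) ≠ 0 := hu
      have hupos : 0 < |u| := abs_pos.mpr hu0
      rw [slope_def_field]
      have hfz : (max (0:ℝ) 0) ^ m = 0 := by simp [zero_pow (by omega : m ≠ 0)]
      rw [hfz, sub_zero, sub_zero, Real.norm_eq_abs, abs_div]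
      have h1 : |max u 0| ≤ |u| := by
        rcases le_or_gt u 0 with h | h
        · rw [max_eq_right h]; simp
        · rw [max_eq_left h.le]
      have hb : |(max u 0) ^ m| ≤ |u| ^ (m-1) * |u| := by
        rw [abs_pow]
        calc |max u 0| ^ m ≤ |u| ^ m := pow_le_pow_left₀ (abs_nonneg _) h1 m
        _ = |u| ^ (m-1) * |u| := by
            conv_lhs => rw [show m = (m-1)+1 by omega]
            rw [pow_succ]
      calc |(max u 0)^m| / |u| ≤ (|u|^(m-1) * |u|) / |u| := by
            exact div_le_div_of_nonneg_right hb hupos.le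
      _ = |u|^(m-1) := mul_div_cancel_right₀ _ (ne_of_gt hupos)
    · have : Filter.Tendsto (fun u : ℝ => |u| ^ (m-1)) (nhds 0) (nhds 0) := by
        have hc : Continuous (fun u : ℝ => |u| ^ (m-1)) := continuous_abs.pow (m-1)
        have h0 : |(0:ℝ)| ^ (m-1) = 0 := by simp [zero_pow (by omega : m - 1 ≠ 0)]
        have := hc.tendsto (0:ℝ)
        rwa [h0] at this
      exact this.mono_left nhdsWithin_le_nhds
  · have hev : (fun u : ℝ => (max u 0) ^ m) =ᶠ[nhds t] fun u => u ^ m := by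
      filter_upwards [Ioi_mem_nhds ht] with u hu
      rw [max_eq_left (le_of_lt hu)]
    simpa [max_eq_left ht.le] using (hasDerivAt_pow m t).congr_of_eventuallyEq hev

lemma hasDerivAt_qfun (θ : ℝ) (m : ℕ) (hm : 2 ≤ m) {x : ℝ} (hx : 0 < x) :
    HasDerivAt (fun y : ℝ => (max (1 - y ^ θ) 0) ^ m)
      (-((m:ℝ) * θ * x ^ (θ-1) * (max (1 - x ^ θ) 0) ^ (m - 1))) x := by
  have h1 : HasDerivAt (fun y : ℝ => 1 - y ^ θ) (-(θ * x ^ (θ-1))) x := by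
    simpa using (Real.hasDerivAt_rpow_const (x := x) (p := θ) (Or.inl hx.ne')).const_sub 1
  have h2 := (hasDerivAt_maxpow m hm (1 - x ^ θ)).comp x h1
  refine h2.congr_deriv ?_
  ring

lemma convexOn_rpow_nonpos {e : ℝ} (he : e ≤ 0) :
    ConvexOn ℝ (Set.Ioi (0:ℝ)) (fun x : ℝ => x ^ e) := by
  refine ⟨convex_Ioi 0, fun x hx y hy a b ha hb hab => ?_⟩
  have hu : a • x + b • y ∈ Set.Ioi (0:ℝ) := (convex_Ioi 0) hx hy ha hb hab
  have hx' : (0:ℝ) < x := hx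
  have hy' : (0:ℝ) < y := hy
  simp only [smul_eq_mul] at hu ⊢
  have hu' : (0:ℝ) < a * x + b * y := hu
  have hlog : Real.log (a*x+b*y) ≥ a * Real.log x + b * Real.log y := by
    have := strictConcaveOn_log_Ioi.concaveOn.2 hx hy ha hb hab
    simpa [smul_eq_mul] using this
  have step1 : e * Real.log (a*x+b*y) ≤ a * (e * Real.log x) + b * (e * Real.log y) := by
    have := mul_le_mul_of_nonpos_left hlog he
    nlinarith [this]
  rw [Real.rpow_def_of_pos hu', Real.rpow_def_of_pos hx', Real.rpow_def_of_pos hy']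
  calc Real.exp (Real.log (a*x+b*y) * e)
      ≤ Real.exp (a * (e * Real.log x) + b * (e * Real.log y)) := by
        apply Real.exp_le_exp.mpr; rw [mul_comm]; exact step1
    _ ≤ a * Real.exp (e * Real.log x) + b * Real.exp (e * Real.log y) := by
        simpa [smul_eq_mul] using convexOn_exp.2 (Set.mem_univ (e * Real.log x))
          (Set.mem_univ (e * Real.log y)) ha hb hab
    _ = a * Real.exp (Real.log x * e) + b * Real.exp (Real.log y * e) := by
        rw [mul_comm (Real.log x) e, mul_comm (Real.log y) e]

lemma antitoneOn_rpow_nonpos {e : ℝ} (he : e ≤ 0) :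
    AntitoneOn (fun x : ℝ => x ^ e) (Set.Ioi 0) := fun x hx _ _ hxy =>
  Real.rpow_le_rpow_of_nonpos hx hxy he

lemma qfun_nonneg (θ : ℝ) (m : ℕ) (x : ℝ) : 0 ≤ (max (1 - x ^ θ) 0) ^ m :=
  pow_nonneg (le_max_right _ _) m

lemma qfun_antitoneOn (θ : ℝ) (hθ0 : 0 ≤ θ) (m : ℕ) :
    AntitoneOn (fun x : ℝ => (max (1 - x ^ θ) 0) ^ m) (Set.Ioi 0) := by
  intro x hx y hy hxy
  refine pow_le_pow_left₀ (le_max_right _ _) ?_ m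
  exact max_le_max (sub_le_sub_left (Real.rpow_le_rpow (le_of_lt hx) hxy hθ0) 1) le_rfl

lemma qfun_convexOn (θ : ℝ) (hθ0 : 0 ≤ θ) (hθ1 : θ ≤ 1) (m : ℕ) :
    ConvexOn ℝ (Set.Ioi 0) (fun x : ℝ => (max (1 - x ^ θ) 0) ^ m) := by
  refine ⟨convex_Ioi 0, fun x hx y hy a b ha hb hab => ?_⟩
  have hu : a • x + b • y ∈ Set.Ioi (0:ℝ) := (convex_Ioi 0) hx hy ha hb hab
  simp only [smul_eq_mul] at hu ⊢
  have hx' : (0:ℝ) < x := hx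
  have hy' : (0:ℝ) < y := hy
  have hcon : a * x ^ θ + b * y ^ θ ≤ (a*x+b*y) ^ θ := by
    have := (Real.concaveOn_rpow hθ0 hθ1).2 (le_of_lt hx' : x ∈ Set.Ici 0)
      (le_of_lt hy' : y ∈ Set.Ici 0) ha hb hab
    simpa [smul_eq_mul] using this
  set Mx := max (1 - x ^ θ) 0 with hMx
  set My := max (1 - y ^ θ) 0 with hMy
  have hMx0 : 0 ≤ Mx := le_max_right _ _
  have hMy0 : 0 ≤ My := le_max_right _ _
  have hstep : max (1 - (a*x+b*y) ^ θ) 0 ≤ a * Mx + b * My := by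
    refine max_le ?_ (by positivity)
    have h1 : 1 - x ^ θ ≤ Mx := le_max_left _ _
    have h2 : 1 - y ^ θ ≤ My := le_max_left _ _
    calc 1 - (a*x+b*y) ^ θ ≤ 1 - (a * x ^ θ + b * y ^ θ) := by linarith
      _ = a * (1 - x ^ θ) + b * (1 - y ^ θ) := by linarith [hab]
      _ ≤ a * Mx + b * My := by
          have := mul_le_mul_of_nonneg_left h1 ha
          have := mul_le_mul_of_nonneg_left h2 hb
          linarith
  calc (max (1 - (a*x+b*y) ^ θ) 0) ^ m ≤ (a * Mx + b * My) ^ m :=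
        pow_le_pow_left₀ (le_max_right _ _) hstep m
    _ ≤ a * Mx ^ m + b * My ^ m := by
        have := (convexOn_pow m).2 (Set.mem_Ici.mpr hMx0) (Set.mem_Ici.mpr hMy0) ha hb hab
        simpa [smul_eq_mul] using this

lemma convexOn_congr' {S : Set ℝ} {f g : ℝ → ℝ} (h : ConvexOn ℝ S f)
    (h' : ∀ x ∈ S, f x = g x) : ConvexOn ℝ S g :=
  ⟨h.1, fun x hx y hy a b ha hb hab => by
    rw [← h' x hx, ← h' y hy, ← h' _ (h.1 hx hy ha hb hab)]
    exact h.2 hx hy ha hb hab⟩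

lemma antitoneOn_congr' {S : Set ℝ} {f g : ℝ → ℝ} (h : AntitoneOn f S)
    (h' : ∀ x ∈ S, f x = g x) : AntitoneOn g S := fun x hx y hy hxy => by
  rw [← h' x hx, ← h' y hy]; exact h hx hy hxy

lemma mul_convexOn_of_antitoneOn {S : Set ℝ} (hS : Convex ℝ S) (f g : ℝ → ℝ)
    (hf0 : ∀ x ∈ S, 0 ≤ f x) (hg0 : ∀ x ∈ S, 0 ≤ g x)
    (hfa : AntitoneOn f S) (hga : AntitoneOn g S)
    (hfc : ConvexOn ℝ S f) (hgc : ConvexOn ℝ S g) :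
    ConvexOn ℝ S (fun x => f x * g x) := by
  refine ⟨hS, fun x hx y hy a b ha hb hab => ?_⟩
  have hu : a • x + b • y ∈ S := hS hx hy ha hb hab
  simp only [smul_eq_mul] at hu ⊢
  have h1 : f (a*x+b*y) ≤ a * f x + b * f y := by
    simpa [smul_eq_mul] using hfc.2 hx hy ha hb hab
  have h2 : g (a*x+b*y) ≤ a * g x + b * g y := by
    simpa [smul_eq_mul] using hgc.2 hx hy ha hb hab
  have h3 : f (a*x+b*y) * g (a*x+b*y) ≤ (a * f x + b * f y) * (a * g x + b * g y) := by
    refine mul_le_mul h1 h2 (hg0 _ hu) ?_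
    have := hf0 x hx; have := hf0 y hy; positivity
  have h4 : 0 ≤ (f x - f y) * (g x - g y) := by
    rcases le_total x y with h | h
    · have := hfa hx hy h; have := hga hx hy h; nlinarith
    · have := hfa hy hx h; have := hga hy hx h; nlinarith
  have hb' : b = 1 - a := by linarith
  subst hb'
  have h5 : (a*f x + (1-a)*f y)*(a*g x + (1-a)*g y)
      ≤ a*(f x*g x) + (1-a)*(f y*g y) := by
    nlinarith [mul_nonneg (mul_nonneg ha hb) h4]
  calc f (a*x+(1-a)*y) * g (a*x+(1-a)*y)
      ≤ (a*f x + (1-a)*f y)*(a*g x + (1-a)*g y) := h3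
    _ ≤ a*(f x*g x) + (1-a)*(f y*g y) := h5

lemma mul_antitoneOn_of_nonneg {S : Set ℝ} (f g : ℝ → ℝ)
    (hf0 : ∀ x ∈ S, 0 ≤ f x) (hg0 : ∀ x ∈ S, 0 ≤ g x)
    (hfa : AntitoneOn f S) (hga : AntitoneOn g S) :
    AntitoneOn (fun x => f x * g x) S := by
  intro x hx y hy hxy
  calc f y * g y ≤ f x * g y := mul_le_mul_of_nonneg_right (hfa hx hy hxy) (hg0 y hy)
    _ ≤ f x * g x := mul_le_mul_of_nonneg_left (hga hx hy hxy) (hf0 x hx)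

lemma convexOn_finset_sum {ι : Type*} (s : Finset ι) {S : Set ℝ} (hS : Convex ℝ S)
    {f : ι → ℝ → ℝ} (h : ∀ i ∈ s, ConvexOn ℝ S (f i)) :
    ConvexOn ℝ S (fun x => ∑ i ∈ s, f i x) := by
  classical
  induction s using Finset.induction with
  | empty => simpa using convexOn_const 0 hS
  | @insert i s hi ih =>
    simp only [Finset.sum_insert hi]
    exact (h i (Finset.mem_insert_self i s)).add
      (ih fun j hj => h j (Finset.mem_insert_of_mem hj))

lemma antitoneOn_finset_sum {ι : Type*} (s : Finset ι) {S : Set ℝ}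
    {f : ι → ℝ → ℝ} (h : ∀ i ∈ s, AntitoneOn (f i) S) :
    AntitoneOn (fun x => ∑ i ∈ s, f i x) S := by
  classical
  induction s using Finset.induction with
  | empty => intro x _ y _ _; simp
  | @insert i s hi ih =>
    simp only [Finset.sum_insert hi]
    exact (h i (Finset.mem_insert_self i s)).add
      (ih fun j hj => h j (Finset.mem_insert_of_mem hj))

noncomputable def Fd (θ : ℝ) (d k : ℕ) (x : ℝ) : ℝ :=
  ∑ j ∈ Finset.range (k+1),
    coefA θ d k j * (x ^ ((j:ℝ)*θ - (k:ℝ)) * (max (1 - x ^ θ) 0) ^ (d-1-j))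

noncomputable def Pt (θ : ℝ) (d k : ℕ) (x : ℝ) (j : ℕ) : ℝ :=
  ((j:ℝ)*θ - (k:ℝ)) * coefA θ d k j *
    (x ^ ((j:ℝ)*θ - ((k:ℝ)+1)) * (max (1 - x ^ θ) 0) ^ (d-1-j))

noncomputable def Qt (θ : ℝ) (d k : ℕ) (x : ℝ) (j : ℕ) : ℝ :=
  ((d:ℝ) - ((j:ℝ)+1)) * θ * coefA θ d k j *
    (x ^ (((j:ℝ)+1)*θ - ((k:ℝ)+1)) * (max (1 - x ^ θ) 0) ^ (d-1-(j+1)))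

lemma term_hasDerivAt (θ : ℝ) (d k j : ℕ) (hjk : j ≤ k) (hk : k + 3 ≤ d)
    {x : ℝ} (hx : 0 < x) :
    HasDerivAt
      (fun y : ℝ => coefA θ d k j * (y ^ ((j:ℝ)*θ - (k:ℝ)) * (max (1 - y ^ θ) 0) ^ (d-1-j)))
      (Pt θ d k x j - Qt θ d k x j) x := by
  have hm : 2 ≤ d - 1 - j := by omega
  have h1 : HasDerivAt (fun y : ℝ => y ^ ((j:ℝ)*θ - (k:ℝ)))
      (((j:ℝ)*θ - (k:ℝ)) * x ^ ((j:ℝ)*θ - (k:ℝ) - 1)) x :=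
    Real.hasDerivAt_rpow_const (Or.inl hx.ne')
  have h2 := hasDerivAt_qfun θ (d-1-j) hm hx
  have h3 := (h1.mul h2).const_mul (coefA θ d k j)
  refine h3.congr_deriv ?_
  unfold Pt Qt
  have e3 : ((d - 1 - j : ℕ) : ℝ) = (d:ℝ) - ((j:ℝ)+1) := by
    rw [Nat.cast_sub (by omega), Nat.cast_sub (by omega)]; push_cast; ring
  have e4 : d - 1 - j - 1 = d - 1 - (j+1) := by omega
  rw [e3, e4,
    show (j:ℝ)*θ - ((k:ℝ)+1) = (j:ℝ)*θ - (k:ℝ) - 1 from by ring,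
    show ((j:ℝ)+1)*θ - ((k:ℝ)+1) = ((j:ℝ)*θ - (k:ℝ)) + (θ-1) from by ring,
    Real.rpow_add hx]
  ring

lemma sum_shift (n : ℕ) (G P Q : ℕ → ℝ) (h0 : G 0 = P 0)
    (hs : ∀ j, j < n → G (j+1) = P (j+1) - Q j) (hPn : P n = 0) :
    ∑ j ∈ Finset.range (n+1), G j = ∑ j ∈ Finset.range n, (P j - Q j) := by
  rw [Finset.sum_range_succ']
  have h1 : ∑ j ∈ Finset.range n, G (j+1) = ∑ j ∈ Finset.range n, (P (j+1) - Q j) :=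
    Finset.sum_congr rfl (fun j hj => hs j (Finset.mem_range.mp hj))
  rw [h1, h0, Finset.sum_sub_distrib, Finset.sum_sub_distrib]
  have h2 : ∑ j ∈ Finset.range n, P (j+1) + P 0 = ∑ j ∈ Finset.range n, P j := by
    rw [← Finset.sum_range_succ', Finset.sum_range_succ, hPn, add_zero]
  linarith [h2]

lemma Fd_succ_eq (θ : ℝ) (d k : ℕ) (x : ℝ) :
    Fd θ d (k+1) x = ∑ j ∈ Finset.range (k+1), (Pt θ d k x j - Qt θ d k x j) := by
  have h0 : coefA θ d (k+1) 0 *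
      (x ^ (((0:ℕ):ℝ)*θ - ((k+1:ℕ):ℝ)) * (max (1 - x ^ θ) 0) ^ (d-1-0))
      = Pt θ d k x 0 := by
    unfold Pt
    simp only [coefA]
    push_cast
    ring_nf
  have hs : ∀ j, j < k+1 → coefA θ d (k+1) (j+1) *
      (x ^ (((j+1:ℕ):ℝ)*θ - ((k+1:ℕ):ℝ)) * (max (1 - x ^ θ) 0) ^ (d-1-(j+1)))
      = Pt θ d k x (j+1) - Qt θ d k x j := by
    intro j hj
    unfold Pt Qt
    simp only [coefA]
    push_cast
    ring_nf
  have hPn : Pt θ d k x (k+1) = 0 := by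
    unfold Pt
    rw [coefA_vanish θ d k (k+1) (Nat.lt_succ_self k)]
    ring
  exact sum_shift (k+1)
    (fun j => coefA θ d (k+1) j *
      (x ^ ((j:ℝ)*θ - ((k+1:ℕ):ℝ)) * (max (1 - x ^ θ) 0) ^ (d-1-j)))
    (Pt θ d k x) (Qt θ d k x) h0 hs hPn

lemma hasDerivAt_Fd (θ : ℝ) (d k : ℕ) (hk : k + 3 ≤ d) {x : ℝ} (hx : 0 < x) :
    HasDerivAt (Fd θ d k) (Fd θ d (k+1) x) x := by
  rw [Fd_succ_eq θ d k x]
  have h : ∀ j ∈ Finset.range (k+1),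
      HasDerivAt
        (fun y : ℝ => coefA θ d k j * (y ^ ((j:ℝ)*θ - (k:ℝ)) * (max (1 - y ^ θ) 0) ^ (d-1-j)))
        (Pt θ d k x j - Qt θ d k x j) x := fun j hj =>
    term_hasDerivAt θ d k j (by simpa [Nat.lt_succ_iff] using Finset.mem_range.mp hj) hk hx
  exact HasDerivAt.fun_sum h

lemma iter_eq (θ : ℝ) (d : ℕ) (φ : ℝ → ℝ)
    (hφ : ∀ x : ℝ, 0 < x → φ x = (max (1 - x ^ θ) 0) ^ (d - 1)) :
    ∀ k : ℕ, k + 2 ≤ d →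
      Set.EqOn (iteratedDerivWithin k φ (Set.Ioi 0)) (Fd θ d k) (Set.Ioi 0) := by
  intro k
  induction k with
  | zero =>
    intro _ x hx
    rw [iteratedDerivWithin_zero, hφ x hx]
    unfold Fd
    simp [Real.rpow_zero, coefA]
  | succ k ih =>
    intro hk x hx
    have ih' := ih (by omega)
    rw [iteratedDerivWithin_succ]
    rw [derivWithin_congr ih' (ih' hx)]
    exact ((hasDerivAt_Fd θ d k (by omega) hx).hasDerivWithinAt).derivWithin
      ((uniqueDiffOn_Ioi (0:ℝ)) x hx)

/-- The function `φ(x) = (1 - x^θ)_+^{d-1}` is `d`-monotone on `(0,∞)`: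
it is `(d-2)`-times differentiable there, and for every `k = 0,…,d-2` the function
`x ↦ (-1)^k φ^{(k)}(x)` is nonnegative, nonincreasing and convex on `(0,∞)`. -/
theorem outer_power_generator_d_monotone
    (d : ℕ) (hd : 2 ≤ d) (p θ : ℝ) (hp : 1 ≤ p) (hθ : θ = 1 / p)
    (φ : ℝ → ℝ) (hφ : ∀ x : ℝ, 0 < x → φ x = (max (1 - x ^ θ) 0) ^ (d - 1)) :
    (∀ k : ℕ, k < d - 2 →
      DifferentiableOn ℝ (iteratedDerivWithin k φ (Set.Ioi 0)) (Set.Ioi 0)) ∧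
    (∀ k : ℕ, k ≤ d - 2 →
      (∀ x ∈ Set.Ioi (0 : ℝ), 0 ≤ (-1 : ℝ) ^ k * iteratedDerivWithin k φ (Set.Ioi 0) x) ∧
      AntitoneOn (fun x => (-1 : ℝ) ^ k * iteratedDerivWithin k φ (Set.Ioi 0) x)
        (Set.Ioi 0) ∧
      ConvexOn ℝ (Set.Ioi 0)
        (fun x => (-1 : ℝ) ^ k * iteratedDerivWithin k φ (Set.Ioi 0) x)) := by
  have hp0 : 0 < p := lt_of_lt_of_le one_pos hp
  have hθ0 : 0 < θ := by rw [hθ]; positivity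
  have hθ1 : θ ≤ 1 := by rw [hθ]; rw [div_le_one hp0]; linarith
  constructor
  · -- differentiability
    intro k hk
    have hk3 : k + 3 ≤ d := by omega
    have hEq := iter_eq θ d φ hφ k (by omega)
    exact DifferentiableOn.congr
      (fun x hx => ((hasDerivAt_Fd θ d k hk3 hx).differentiableAt).differentiableWithinAt)
      hEq
  · intro k hk
    have hk2 : k + 2 ≤ d := by omega
    have hEq := iter_eq θ d φ hφ k hk2
    set b : ℕ → ℝ := fun j => (-1:ℝ)^k * coefA θ d k j with hb
    have hbnn : ∀ j, 0 ≤ b j := fun j =>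
      coefA_sign θ d hθ0.le hθ1 k (by exact_mod_cast le_trans (by omega : k ≤ d) le_rfl) j
    -- the model function
    set T : ℝ → ℝ := fun x => ∑ j ∈ Finset.range (k+1),
      b j * (x ^ ((j:ℝ)*θ - (k:ℝ)) * (max (1 - x ^ θ) 0) ^ (d-1-j)) with hT
    have hTeq : ∀ x ∈ Set.Ioi (0:ℝ),
        T x = (-1:ℝ)^k * iteratedDerivWithin k φ (Set.Ioi 0) x := by
      intro x hx
      rw [hEq hx]
      unfold Fd
      rw [Finset.mul_sum]
      refine Finset.sum_congr rfl (fun j hj => by rw [hb]; ring)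
    have he : ∀ j, j ≤ k → (j:ℝ)*θ - (k:ℝ) ≤ 0 := by
      intro j hj
      have h1 : (j:ℝ) ≤ (k:ℝ) := by exact_mod_cast hj
      have h2 : (j:ℝ) * θ ≤ (j:ℝ) * 1 :=
        mul_le_mul_of_nonneg_left hθ1 (Nat.cast_nonneg j)
      linarith
    refine ⟨?_, ?_, ?_⟩
    · -- nonneg
      intro x hx
      rw [← hTeq x hx, hT]
      refine Finset.sum_nonneg (fun j hj => ?_)
      have hx' : (0:ℝ) < x := hx
      exact mul_nonneg (hbnn j)
        (mul_nonneg (Real.rpow_nonneg hx'.le _) (qfun_nonneg θ (d-1-j) x))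
    · -- antitone
      refine antitoneOn_congr' (f := T) ?_ hTeq
      rw [hT]
      refine antitoneOn_finset_sum _ (fun j hj => ?_)
      have hej := he j (by simpa [Nat.lt_succ_iff] using Finset.mem_range.mp hj)
      have hant := mul_antitoneOn_of_nonneg (S := Set.Ioi 0)
        (fun x => x ^ ((j:ℝ)*θ - (k:ℝ))) (fun x => (max (1 - x ^ θ) 0) ^ (d-1-j))
        (fun x hx => Real.rpow_nonneg (le_of_lt hx) _)
        (fun x _ => qfun_nonneg θ (d-1-j) x)
        (antitoneOn_rpow_nonpos hej) (qfun_antitoneOn θ hθ0.le (d-1-j))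
      intro x hx y hy hxy
      exact mul_le_mul_of_nonneg_left (hant hx hy hxy) (hbnn j)
    · -- convex
      refine convexOn_congr' (f := T) ?_ hTeq
      rw [hT]
      refine convexOn_finset_sum _ (convex_Ioi 0) (fun j hj => ?_)
      have hej := he j (by simpa [Nat.lt_succ_iff] using Finset.mem_range.mp hj)
      have hconv := mul_convexOn_of_antitoneOn (convex_Ioi 0)
        (fun x => x ^ ((j:ℝ)*θ - (k:ℝ))) (fun x => (max (1 - x ^ θ) 0) ^ (d-1-j))
        (fun x hx => Real.rpow_nonneg (le_of_lt hx) _)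
        (fun x _ => qfun_nonneg θ (d-1-j) x)
        (antitoneOn_rpow_nonpos hej) (qfun_antitoneOn θ hθ0.le (d-1-j))
        (convexOn_rpow_nonpos hej) (qfun_convexOn θ hθ0.le hθ1 (d-1-j))
      have := hconv.smul (hbnn j)
      refine convexOn_congr' this (fun x hx => ?_)
      simp [smul_eq_mul]
end

section
/- Fix an integer d ≥ 2 and a real number p ≥ 1, and set θ = 1/p. Let V be a random variable with values in (0,1] such that E[(1 − c/V^p)_+^{d-1}] = (1 − c^θ)_+^{d-1} for all c ≥ 0, and let U = (U_1,…,U_d) be a random vector with values in [0,1]^d, independent of V, whose survival function is P(U_1 > u_1, …, U_d > u_d) = (1 − (u_1 + … + u_d))_+^{d-1} for all u ∈ [0,∞)^d. Then the random vector Z = V·(U_1^θ, …, U_d^θ) satisfies P(Z_1 > z_1, …, Z_d > z_d) = (1 − ‖z‖_p)_+^{d-1} for all z ∈ [0,∞)^d, where ‖z‖_p = (z_1^p + … + z_d^p)^{1/p}. -/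
open MeasureTheory ProbabilityTheory

/-- If `V` has values in `(0,1]` with
`E[(1 − c/V^p)_+^{d-1}] = (1 − c^θ)_+^{d-1}` for all `c ≥ 0`, and `U` is an independent
random vector in `[0,1]^d` with survival function `(1 − (u_1+…+u_d))_+^{d-1}`, then
`Z = V·U^θ` (componentwise) has survival function `(1 − ‖z‖_p)_+^{d-1}`. -/
theorem survival_function_of_VU
    (d : ℕ) (hd : 2 ≤ d) (p θ : ℝ) (hp : 1 ≤ p) (hθ : θ = 1 / p)
    {Ω : Type*} [MeasurableSpace Ω] (P : Measure Ω) [IsProbabilityMeasure P]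
    (V : Ω → ℝ) (U : Ω → Fin d → ℝ)
    (hVmeas : Measurable V) (hUmeas : Measurable U)
    (hVrange : ∀ ω, V ω ∈ Set.Ioc (0 : ℝ) 1)
    (hUrange : ∀ ω i, U ω i ∈ Set.Icc (0 : ℝ) 1)
    (hindep : IndepFun V U P)
    (hV : ∀ c : ℝ, 0 ≤ c →
      ∫ ω, (max (1 - c / (V ω) ^ p) 0) ^ (d - 1) ∂P = (max (1 - c ^ θ) 0) ^ (d - 1))
    (hU : ∀ u : Fin d → ℝ, (∀ i, 0 ≤ u i) →
      P {ω | ∀ i, u i < U ω i} = ENNReal.ofReal ((max (1 - ∑ i, u i) 0) ^ (d - 1))) :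
    ∀ z : Fin d → ℝ, (∀ i, 0 ≤ z i) →
      P {ω | ∀ i, z i < V ω * (U ω i) ^ θ}
        = ENNReal.ofReal ((max (1 - (∑ i, (z i) ^ p) ^ θ) 0) ^ (d - 1)) := by
  intro z hz
  have hp0 : (0:ℝ) < p := lt_of_lt_of_le one_pos hp
  have hθ0 : 0 < θ := by rw [hθ]; positivity
  have hθp : θ * p = 1 := by rw [hθ]; field_simp
  set c : ℝ := ∑ i, z i ^ p with hc
  have hc0 : 0 ≤ c := Finset.sum_nonneg fun i _ => Real.rpow_nonneg (hz i) p
  have hmeas_rpowθ : Measurable fun x : ℝ => x ^ θ :=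
    (Real.continuous_rpow_const hθ0.le).measurable
  have hmeas_rpowp : Measurable fun x : ℝ => x ^ p :=
    (Real.continuous_rpow_const hp0.le).measurable
  -- the set in the product space
  set S : Set (ℝ × (Fin d → ℝ)) := {x | ∀ i, z i < x.1 * (x.2 i) ^ θ} with hSdef
  have hSmeas : MeasurableSet S := by
    have : S = ⋂ i, {x : ℝ × (Fin d → ℝ) | z i < x.1 * (x.2 i) ^ θ} := by
      ext x; simp [hSdef]
    rw [this]
    exact MeasurableSet.iInter fun i =>
      measurableSet_lt measurable_const
        (measurable_fst.mul (hmeas_rpowθ.comp ((measurable_pi_apply i).comp measurable_snd)))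
  haveI : IsProbabilityMeasure (P.map U) := Measure.isProbabilityMeasure_map hUmeas.aemeasurable
  haveI : IsProbabilityMeasure (P.map V) := Measure.isProbabilityMeasure_map hVmeas.aemeasurable
  -- key pointwise equivalence
  have hslice : ∀ v : ℝ, v ∈ Set.Ioc (0:ℝ) 1 → ∀ u : ℝ, 0 ≤ u →
      ∀ z_ : ℝ, 0 ≤ z_ → (z_ < v * u ^ θ ↔ (z_ / v) ^ p < u) := by
    intro v hv u hu z_ hz_
    have hv0 : 0 < v := hv.1
    rw [← div_lt_iff₀' hv0]
    constructor
    · intro h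
      have := Real.rpow_lt_rpow (by positivity) h hp0
      rwa [← Real.rpow_mul hu, hθp, Real.rpow_one] at this
    · intro h
      have := Real.rpow_lt_rpow (by positivity) h hθ0
      rwa [← Real.rpow_mul (by positivity), mul_comm p θ, hθp, Real.rpow_one] at this
  -- the inner slice measure
  have hinner : ∀ v : ℝ, v ∈ Set.Ioc (0:ℝ) 1 →
      (P.map U) (Prod.mk v ⁻¹' S)
        = ENNReal.ofReal ((max (1 - c / v ^ p) 0) ^ (d - 1)) := by
    intro v hv
    have hv0 : 0 < v := hv.1
    have hpre : Prod.mk v ⁻¹' S = {u : Fin d → ℝ | ∀ i, z i < v * u i ^ θ} := rfl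
    rw [hpre, Measure.map_apply hUmeas]
    · have hsets : U ⁻¹' {u : Fin d → ℝ | ∀ i, z i < v * u i ^ θ}
          = {ω | ∀ i, (z i / v) ^ p < U ω i} := by
        ext ω
        simp only [Set.mem_preimage, Set.mem_setOf_eq]
        exact forall_congr' fun i =>
          hslice v hv (U ω i) (hUrange ω i).1 (z i) (hz i)
      rw [hsets, hU (fun i => (z i / v) ^ p)
        (fun i => Real.rpow_nonneg (div_nonneg (hz i) hv0.le) p)]
      congr 2
      have : ∑ i, (z i / v) ^ p = c / v ^ p := by
        rw [hc, Finset.sum_div]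
        exact Finset.sum_congr rfl fun i _ => Real.div_rpow (hz i) hv0.le p
      rw [this]
    · have : {u : Fin d → ℝ | ∀ i, z i < v * u i ^ θ}
          = ⋂ i, {u : Fin d → ℝ | z i < v * u i ^ θ} := by ext u; simp
      rw [this]
      exact MeasurableSet.iInter fun i =>
        measurableSet_lt measurable_const
          ((hmeas_rpowθ.comp (measurable_pi_apply i)).const_mul v)
  -- rewrite the LHS via the product measure
  have hmapS : P {ω | ∀ i, z i < V ω * (U ω i) ^ θ}
      = ((P.map V).prod (P.map U)) S := by
    rw [← (indepFun_iff_map_prod_eq_prod_map_map hVmeas.aemeasurable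
      hUmeas.aemeasurable).mp hindep,
      Measure.map_apply (hVmeas.prodMk hUmeas) hSmeas]
    rfl
  have hfmeas : Measurable fun v : ℝ => (P.map U) (Prod.mk v ⁻¹' S) :=
    measurable_measure_prodMk_left hSmeas
  have hprod : ((P.map V).prod (P.map U)) S
      = ∫⁻ ω, ENNReal.ofReal ((max (1 - c / (V ω) ^ p) 0) ^ (d - 1)) ∂P := by
    rw [Measure.prod_apply hSmeas, lintegral_map hfmeas hVmeas]
    exact lintegral_congr fun ω => hinner (V ω) (hVrange ω)
  -- compare with the real integral
  have hgmeas : Measurable fun ω => (max (1 - c / (V ω) ^ p) 0) ^ (d - 1) :=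
    (((measurable_const.sub ((hmeas_rpowp.comp hVmeas).const_div c)).max
      measurable_const).pow_const (d - 1))
  have hbound : ∀ ω, (max (1 - c / (V ω) ^ p) 0) ^ (d - 1) ∈ Set.Icc (0:ℝ) 1 := by
    intro ω
    have hv0 : 0 < V ω := (hVrange ω).1
    have h1 : c / (V ω) ^ p ≥ 0 := div_nonneg hc0 (Real.rpow_nonneg hv0.le p)
    constructor
    · positivity
    · exact pow_le_one₀ (le_max_right _ _) (max_le (by linarith) one_pos.le)
  have hint : Integrable (fun ω => (max (1 - c / (V ω) ^ p) 0) ^ (d - 1)) P := by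
    refine (integrable_const (1:ℝ)).mono' hgmeas.aestronglyMeasurable ?_
    filter_upwards with ω
    rw [Real.norm_eq_abs, abs_of_nonneg (hbound ω).1]
    exact (hbound ω).2
  have hlint : ∫⁻ ω, ENNReal.ofReal ((max (1 - c / (V ω) ^ p) 0) ^ (d - 1)) ∂P
      = ENNReal.ofReal (∫ ω, (max (1 - c / (V ω) ^ p) 0) ^ (d - 1) ∂P) :=
    (ofReal_integral_eq_lintegral_ofReal hint
      (Filter.Eventually.of_forall fun ω => (hbound ω).1)).symm
  rw [hmapS, hprod, hlint, hV c hc0]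
end

section
/- Fix an integer d ≥ 2. Let ν be a measure on (0,∞) such that ν((t,∞)) < ∞ for every t > 0 and ν((0,∞)) = ∞. Define φ_ν(t) = ∫_{(0,∞)} (1 − t/r)_+^{d-1} dν(r) for t > 0. Then: (i) φ_ν(t) < ∞ for every t > 0; (ii) φ_ν is d-monotone on (0,∞), i.e., φ_ν is (d-2)-times differentiable on (0,∞) and (-1)^k φ_ν^{(k)} is nonnegative, nonincreasing and convex for every k = 0,…,d-2; (iii) φ_ν(t) → 0 as t → ∞; and (iv) φ_ν(t) → ∞ as t ↓ 0. -/
open MeasureTheory Set Filter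

lemma gen14_hasDerivAt_posPart_pow (m : ℕ) (hm : 1 ≤ m) (x : ℝ) :
    HasDerivAt (fun y : ℝ => max y 0 ^ (m + 1)) ((m + 1 : ℝ) * max x 0 ^ m) x := by
  have hm' : m ≠ 0 := Nat.one_le_iff_ne_zero.1 hm
  rcases lt_trichotomy x 0 with hx | hx | hx
  · have h0 : max x 0 = 0 := max_eq_right hx.le
    have hc : HasDerivAt (fun _ : ℝ => (0:ℝ)) 0 x := hasDerivAt_const x 0
    have heq : (fun y : ℝ => max y 0 ^ (m + 1)) =ᶠ[nhds x] fun _ => (0:ℝ) := by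
      filter_upwards [Iio_mem_nhds hx] with y hy
      rw [max_eq_right (mem_Iio.1 hy).le, zero_pow (Nat.succ_ne_zero m)]
    have := hc.congr_of_eventuallyEq heq
    simpa [h0, zero_pow hm'] using this
  · subst hx
    rw [hasDerivAt_iff_tendsto_slope]
    have h0 : max (0:ℝ) 0 = 0 := max_self 0
    have key : Tendsto (slope (fun y : ℝ => max y 0 ^ (m + 1)) 0)
        (nhdsWithin 0 {(0:ℝ)}ᶜ) (nhds 0) := by
      have hbound : ∀ y : ℝ, ‖slope (fun y : ℝ => max y 0 ^ (m + 1)) 0 y‖ ≤ |y| ^ m := by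
        intro y
        rcases eq_or_ne y 0 with rfl | hy
        · simp [slope, zero_pow (Nat.succ_ne_zero m), zero_pow hm']
        · have hs : slope (fun y : ℝ => max y 0 ^ (m + 1)) 0 y
              = max y 0 ^ (m+1) / y := by
            rw [slope_def_field]
            rw [max_self, zero_pow (Nat.succ_ne_zero m), sub_zero, sub_zero]
          rw [hs, norm_div, Real.norm_eq_abs, Real.norm_eq_abs, abs_pow]
          rcases le_or_gt y 0 with h | h
          · rw [max_eq_right h, abs_of_nonneg le_rfl, zero_pow (Nat.succ_ne_zero m),
              zero_div]
            positivity
          · rw [max_eq_left h.le, abs_of_pos h, pow_succ, mul_div_assoc,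
              div_self hy, mul_one]
      have hlim : Tendsto (fun y : ℝ => |y| ^ m) (nhdsWithin 0 {(0:ℝ)}ᶜ) (nhds 0) := by
        have hcont : Tendsto (fun y : ℝ => |y| ^ m) (nhds 0) (nhds (|(0:ℝ)| ^ m)) :=
          (continuous_abs.pow m).tendsto 0
        have : (|(0:ℝ)| ^ m) = 0 := by simp [zero_pow hm']
        rw [this] at hcont
        exact hcont.mono_left nhdsWithin_le_nhds
      exact squeeze_zero_norm hbound hlim
    have : ((m:ℝ)+1) * max (0:ℝ) 0 ^ m = 0 := by simp [zero_pow hm']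
    rw [this]
    exact key
  · have heq : (fun y : ℝ => max y 0 ^ (m + 1)) =ᶠ[nhds x] fun y => y ^ (m+1) := by
      filter_upwards [Ioi_mem_nhds hx] with y hy
      rw [max_eq_left (mem_Ioi.1 hy).le]
    have := (hasDerivAt_pow (m+1) x).congr_of_eventuallyEq heq
    simpa [max_eq_left hx.le] using this

lemma gen14_posPart_pow_convex (m : ℕ) {a b u v : ℝ} (ha : 0 ≤ a) (hb : 0 ≤ b)
    (hab : a + b = 1) :
    max (a * u + b * v) 0 ^ m ≤ a * max u 0 ^ m + b * max v 0 ^ m := by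
  have h1 : max (a * u + b * v) 0 ≤ a * max u 0 + b * max v 0 := by
    apply max_le
    · exact add_le_add (mul_le_mul_of_nonneg_left (le_max_left u 0) ha)
        (mul_le_mul_of_nonneg_left (le_max_left v 0) hb)
    · positivity
  calc max (a * u + b * v) 0 ^ m ≤ (a * max u 0 + b * max v 0) ^ m :=
        pow_le_pow_left₀ (le_max_right _ _) h1 m
    _ ≤ a * max u 0 ^ m + b * max v 0 ^ m := by
        have := (convexOn_pow m).2 (Set.mem_Ici.2 (le_max_right u 0))
          (Set.mem_Ici.2 (le_max_right v 0)) ha hb hab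
        simpa [smul_eq_mul] using this


noncomputable def gen14F (d k : ℕ) (t r : ℝ) : ℝ :=
  ((d - 1).descFactorial k : ℝ) * (-r⁻¹) ^ k * max (1 - t / r) 0 ^ (d - 1 - k)

lemma gen14F_meas (d k : ℕ) (t : ℝ) : Measurable (gen14F d k t) := by
  unfold gen14F
  exact ((measurable_const.mul ((measurable_inv.neg).pow_const k)).mul
    (((measurable_const.sub (measurable_const.div measurable_id)).max
      measurable_const).pow_const _))

lemma gen14F_norm_le (d k : ℕ) (hk : k + 1 ≤ d - 1) {a t r : ℝ} (ha : 0 < a)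
    (hat : a ≤ t) (hr : 0 < r) :
    ‖gen14F d k t r‖ ≤
      Set.indicator (Set.Ioi a) (fun _ => ((d - 1).descFactorial k : ℝ) * a⁻¹ ^ k) r := by
  have hC : (0:ℝ) ≤ ((d - 1).descFactorial k : ℝ) * a⁻¹ ^ k := by positivity
  rcases le_or_gt r t with h | h
  · have hmax : max (1 - t / r) 0 = 0 := by
      apply max_eq_right
      have : (1:ℝ) ≤ t / r := (one_le_div hr).2 h
      linarith
    have : gen14F d k t r = 0 := by
      unfold gen14F
      rw [hmax, zero_pow (by omega), mul_zero]
    rw [this, norm_zero]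
    exact Set.indicator_nonneg (fun _ _ => hC) r
  · have hra : a < r := lt_of_le_of_lt hat h
    rw [Set.indicator_of_mem (Set.mem_Ioi.2 hra)]
    unfold gen14F
    rw [Real.norm_eq_abs, abs_mul, abs_mul, abs_pow, abs_pow, abs_neg, abs_inv,
      abs_of_pos hr, abs_of_nonneg (Nat.cast_nonneg (α := ℝ) _)]
    have h1 : (r⁻¹) ^ k ≤ a⁻¹ ^ k :=
      pow_le_pow_left₀ (by positivity) (inv_anti₀ ha hra.le) k
    have h2 : |max (1 - t / r) 0| ^ (d - 1 - k) ≤ 1 := by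
      apply pow_le_one₀ (abs_nonneg _)
      rw [abs_of_nonneg (le_max_right _ _)]
      apply max_le _ zero_le_one
      have : 0 < t / r := div_pos (lt_of_lt_of_le ha hat) hr
      linarith
    calc ((d - 1).descFactorial k : ℝ) * r⁻¹ ^ k * |max (1 - t / r) 0| ^ (d - 1 - k)
        ≤ ((d - 1).descFactorial k : ℝ) * r⁻¹ ^ k * 1 := by
          apply mul_le_mul_of_nonneg_left h2; positivity
      _ = ((d - 1).descFactorial k : ℝ) * r⁻¹ ^ k := mul_one _
      _ ≤ ((d - 1).descFactorial k : ℝ) * a⁻¹ ^ k :=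
          mul_le_mul_of_nonneg_left h1 (Nat.cast_nonneg _)

lemma gen14_indicator_integrable (ν : Measure ℝ)
    (hfin : ∀ t : ℝ, 0 < t → ν (Set.Ioi t) < ⊤) {a : ℝ} (ha : 0 < a) (C : ℝ) :
    Integrable (Set.indicator (Set.Ioi a) (fun _ => C)) (ν.restrict (Set.Ioi 0)) := by
  rw [integrable_indicator_iff measurableSet_Ioi]
  refine integrableOn_const (ne_of_lt ?_) (by simp)
  calc (ν.restrict (Set.Ioi 0)) (Set.Ioi a) ≤ ν (Set.Ioi a) :=
        Measure.restrict_apply_le _ _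
    _ < ⊤ := hfin a ha

lemma gen14F_integrable (d k : ℕ) (hk : k + 1 ≤ d - 1) {t : ℝ} (ht : 0 < t)
    (ν : Measure ℝ) (hfin : ∀ t : ℝ, 0 < t → ν (Set.Ioi t) < ⊤) :
    Integrable (gen14F d k t) (ν.restrict (Set.Ioi 0)) := by
  apply Integrable.mono' (gen14_indicator_integrable ν hfin ht
    (((d - 1).descFactorial k : ℝ) * t⁻¹ ^ k))
    (gen14F_meas d k t).aestronglyMeasurable
  filter_upwards [ae_restrict_mem measurableSet_Ioi] with r hr
  exact gen14F_norm_le d k hk ht le_rfl hr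

lemma gen14F_hasDerivAt (d k : ℕ) (hk : k + 2 ≤ d - 1) (r t : ℝ) :
    HasDerivAt (fun s => gen14F d k s r) (gen14F d (k + 1) t r) t := by
  obtain ⟨m, hm1, hm2, hm3⟩ : ∃ m, d - 1 - k = m + 1 ∧ d - 1 - (k + 1) = m ∧ 1 ≤ m := by
    exact ⟨d - 2 - k, by omega, by omega, by omega⟩
  have hinner : HasDerivAt (fun s : ℝ => 1 - s / r) (-(1 / r)) t := by
    simpa using ((hasDerivAt_id t).div_const r).const_sub 1
  have houter := gen14_hasDerivAt_posPart_pow m hm3 (1 - t / r)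
  have hcomp := HasDerivAt.comp t houter hinner
  have := hcomp.const_mul (((d - 1).descFactorial k : ℝ) * (-r⁻¹) ^ k)
  have hfun : (fun s => ((d - 1).descFactorial k : ℝ) * (-r⁻¹) ^ k *
      ((fun y : ℝ => max y 0 ^ (m + 1)) ∘ fun s : ℝ => 1 - s / r) s)
      = fun s => gen14F d k s r := by
    funext s
    simp only [Function.comp, gen14F, hm1]
  rw [hfun] at this
  refine this.congr_deriv ?_
  unfold gen14F
  rw [hm2, Nat.descFactorial_succ]
  have hd1 : d - 1 - k = m + 1 := hm1
  rw [hd1]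
  push_cast
  rw [one_div]
  ring

noncomputable def gen14Phi (d : ℕ) (ν : Measure ℝ) (k : ℕ) (t : ℝ) : ℝ :=
  ∫ r in Set.Ioi (0:ℝ), gen14F d k t r ∂ν

lemma gen14_hasDerivAt_Phi (d k : ℕ) (hk : k + 2 ≤ d - 1) (ν : Measure ℝ)
    (hfin : ∀ t : ℝ, 0 < t → ν (Set.Ioi t) < ⊤) {t₀ : ℝ} (ht₀ : 0 < t₀) :
    HasDerivAt (gen14Phi d ν k) (gen14Phi d ν (k + 1) t₀) t₀ := by
  have hε : (0:ℝ) < t₀ / 2 := half_pos ht₀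
  have h := hasDerivAt_integral_of_dominated_loc_of_deriv_le (μ := ν.restrict (Set.Ioi 0))
    (F := fun t r => gen14F d k t r) (F' := fun t r => gen14F d (k + 1) t r)
    (x₀ := t₀)
    (bound := Set.indicator (Set.Ioi (t₀ / 2))
      (fun _ => ((d - 1).descFactorial (k + 1) : ℝ) * (t₀ / 2)⁻¹ ^ (k + 1)))
    (Metric.ball_mem_nhds t₀ hε)
    (Eventually.of_forall fun t => (gen14F_meas d k t).aestronglyMeasurable)
    (gen14F_integrable d k (by omega) ht₀ ν hfin)
    ((gen14F_meas d (k + 1) t₀).aestronglyMeasurable)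
    ?_
    (gen14_indicator_integrable ν hfin hε _)
    (Eventually.of_forall fun r t _ => gen14F_hasDerivAt d k hk r t)
  · exact h.2
  · filter_upwards [ae_restrict_mem measurableSet_Ioi] with r hr t htb
    have hball : t₀ / 2 ≤ t := by
      have := Metric.mem_ball.1 htb
      rw [Real.dist_eq, abs_lt] at this
      linarith [this.1]
    exact gen14F_norm_le d (k + 1) (by omega) hε hball hr

lemma gen14_phi_eq (d : ℕ) (ν : Measure ℝ) (t : ℝ) :
    (∫⁻ r in Set.Ioi (0:ℝ),
        ENNReal.ofReal ((max (1 - t / r) 0) ^ (d - 1)) ∂ν).toReal = gen14Phi d ν 0 t := by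
  rw [gen14Phi, MeasureTheory.integral_eq_lintegral_of_nonneg_ae
    (Eventually.of_forall fun r => by unfold gen14F; positivity)
    (gen14F_meas d 0 t).aestronglyMeasurable]
  congr 1
  apply lintegral_congr
  intro r
  simp [gen14F]

lemma gen14_iter (d : ℕ) (hd : 2 ≤ d) (ν : Measure ℝ)
    (hfin : ∀ t : ℝ, 0 < t → ν (Set.Ioi t) < ⊤) (φ : ℝ → ℝ)
    (hφΦ : ∀ t : ℝ, φ t = gen14Phi d ν 0 t) :
    ∀ k : ℕ, k ≤ d - 2 → ∀ t ∈ Set.Ioi (0:ℝ),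
      iteratedDerivWithin k φ (Set.Ioi 0) t = gen14Phi d ν k t := by
  intro k
  induction k with
  | zero =>
    intro _ t _
    rw [iteratedDerivWithin_zero]
    exact hφΦ t
  | succ k ih =>
    intro hk t ht
    have hopen : IsOpen (Set.Ioi (0:ℝ)) := isOpen_Ioi
    rw [iteratedDerivWithin_succ,
      derivWithin_of_isOpen hopen ht]
    have heq : iteratedDerivWithin k φ (Set.Ioi 0) =ᶠ[nhds t] gen14Phi d ν k :=
      Filter.eventuallyEq_of_mem (hopen.mem_nhds ht)
        (fun x hx => ih (by omega) x hx)
    rw [heq.deriv_eq]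
    exact (gen14_hasDerivAt_Phi d k (by omega) ν hfin ht).deriv

lemma gen14_negpow_F (d k : ℕ) (t r : ℝ) :
    (-1:ℝ) ^ k * gen14F d k t r =
      ((d - 1).descFactorial k : ℝ) * (r⁻¹) ^ k * max (1 - t / r) 0 ^ (d - 1 - k) := by
  unfold gen14F
  rw [neg_eq_neg_one_mul (r⁻¹), mul_pow]
  have h : (-1:ℝ) ^ k * (-1:ℝ) ^ k = 1 := by
    rw [← pow_add, ← two_mul, pow_mul]
    norm_num
  calc (-1:ℝ) ^ k * (((d - 1).descFactorial k : ℝ) * ((-1:ℝ) ^ k * r⁻¹ ^ k)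
        * max (1 - t / r) 0 ^ (d - 1 - k))
      = ((-1:ℝ) ^ k * (-1:ℝ) ^ k) * (((d - 1).descFactorial k : ℝ) * r⁻¹ ^ k
        * max (1 - t / r) 0 ^ (d - 1 - k)) := by ring
    _ = _ := by rw [h, one_mul]
/-- For a measure `ν` on `(0,∞)` with `ν((t,∞)) < ∞` for all `t > 0` and
`ν((0,∞)) = ∞`, the function `φ_ν(t) = ∫ (1 − t/r)_+^{d-1} ν(dr)` is finite for `t > 0`,
is `d`-monotone on `(0,∞)`, tends to `0` at `∞` and to `∞` as `t ↓ 0`. -/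
theorem generator_of_radon_measure
    (d : ℕ) (hd : 2 ≤ d) (ν : Measure ℝ)
    (hsupp : ν (Set.Iic 0) = 0)
    (hfin : ∀ t : ℝ, 0 < t → ν (Set.Ioi t) < ⊤)
    (hinf : ν (Set.Ioi 0) = ⊤)
    (φ : ℝ → ℝ)
    (hφ : ∀ t : ℝ, φ t =
      (∫⁻ r in Set.Ioi (0 : ℝ), ENNReal.ofReal ((max (1 - t / r) 0) ^ (d - 1)) ∂ν).toReal) :
    (∀ t : ℝ, 0 < t →
      (∫⁻ r in Set.Ioi (0 : ℝ), ENNReal.ofReal ((max (1 - t / r) 0) ^ (d - 1)) ∂ν) < ⊤) ∧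
    (∀ k : ℕ, k < d - 2 →
      DifferentiableOn ℝ (iteratedDerivWithin k φ (Set.Ioi 0)) (Set.Ioi 0)) ∧
    (∀ k : ℕ, k ≤ d - 2 →
      (∀ x ∈ Set.Ioi (0 : ℝ), 0 ≤ (-1 : ℝ) ^ k * iteratedDerivWithin k φ (Set.Ioi 0) x) ∧
      AntitoneOn (fun x => (-1 : ℝ) ^ k * iteratedDerivWithin k φ (Set.Ioi 0) x)
        (Set.Ioi 0) ∧
      ConvexOn ℝ (Set.Ioi 0)
        (fun x => (-1 : ℝ) ^ k * iteratedDerivWithin k φ (Set.Ioi 0) x)) ∧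
    Filter.Tendsto φ Filter.atTop (nhds 0) ∧
    Filter.Tendsto φ (nhdsWithin 0 (Set.Ioi 0)) Filter.atTop := by
  have hφΦ : ∀ t : ℝ, φ t = gen14Phi d ν 0 t := fun t => by
    rw [hφ t, gen14_phi_eq d ν t]
  have hiter := gen14_iter d hd ν hfin φ hφΦ
  have hbound : ∀ t : ℝ, 0 < t →
      (∫⁻ r in Set.Ioi (0:ℝ), ENNReal.ofReal ((max (1 - t / r) 0) ^ (d - 1)) ∂ν)
        ≤ ν (Set.Ioi t) := by
    intro t ht
    have h1 : ∀ r ∈ Set.Ioi (0:ℝ),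
        ENNReal.ofReal ((max (1 - t / r) 0) ^ (d - 1))
          ≤ Set.indicator (Set.Ioi t) (fun _ => (1:ENNReal)) r := by
      intro r hr
      have hr' : (0:ℝ) < r := hr
      rcases le_or_gt r t with h | h
      · have hmax : max (1 - t / r) 0 = 0 := by
          apply max_eq_right
          have : (1:ℝ) ≤ t / r := (one_le_div hr').2 h
          linarith
        rw [hmax, zero_pow (by omega : d - 1 ≠ 0), ENNReal.ofReal_zero]
        exact zero_le
      · rw [Set.indicator_of_mem (Set.mem_Ioi.2 h)]
        apply ENNReal.ofReal_le_one.2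
        apply pow_le_one₀ (le_max_right _ _)
        apply max_le _ zero_le_one
        have : 0 < t / r := div_pos ht hr'
        linarith
    calc (∫⁻ r in Set.Ioi (0:ℝ), ENNReal.ofReal ((max (1 - t / r) 0) ^ (d - 1)) ∂ν)
        ≤ ∫⁻ r in Set.Ioi (0:ℝ), Set.indicator (Set.Ioi t) (fun _ => (1:ENNReal)) r ∂ν := by
          apply lintegral_mono_ae
          filter_upwards [ae_restrict_mem measurableSet_Ioi] with r hr using h1 r hr
      _ = (ν.restrict (Set.Ioi 0)) (Set.Ioi t) := by
          rw [lintegral_indicator measurableSet_Ioi]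
          simp
      _ ≤ ν (Set.Ioi t) := Measure.restrict_apply_le _ _
  have hφ_nonneg : ∀ t : ℝ, 0 ≤ φ t := fun t => by
    rw [hφ t]; exact ENNReal.toReal_nonneg
  refine ⟨?_, ?_, ?_, ?_, ?_⟩
  · intro t ht
    exact lt_of_le_of_lt (hbound t ht) (hfin t ht)
  · intro k hk x hx
    have h := gen14_hasDerivAt_Phi d k (by omega) ν hfin (Set.mem_Ioi.1 hx)
    exact (h.differentiableAt.differentiableWithinAt).congr
      (fun y hy => hiter k (by omega) y hy) (hiter k (by omega) x hx)
  · intro k hk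
    have hψ : ∀ x ∈ Set.Ioi (0:ℝ), (-1:ℝ) ^ k * iteratedDerivWithin k φ (Set.Ioi 0) x
        = ∫ r in Set.Ioi (0:ℝ), (-1:ℝ) ^ k * gen14F d k x r ∂ν := by
      intro x hx
      rw [hiter k hk x hx, gen14Phi]
      exact (integral_const_mul _ _).symm
    have hint : ∀ {t : ℝ}, 0 < t →
        Integrable (fun r => (-1:ℝ) ^ k * gen14F d k t r) (ν.restrict (Set.Ioi 0)) :=
      fun {t} ht => (gen14F_integrable d k (by omega) ht ν hfin).const_mul _
    refine ⟨?_, ?_, ?_⟩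
    · intro x hx
      rw [hψ x hx]
      apply integral_nonneg_of_ae
      filter_upwards [ae_restrict_mem measurableSet_Ioi] with r hr
      have hr' : (0:ℝ) < r := hr
      rw [gen14_negpow_F]
      exact mul_nonneg (mul_nonneg (Nat.cast_nonneg _)
        (pow_nonneg (inv_nonneg.2 hr'.le) k)) (pow_nonneg (le_max_right _ _) _)
    · intro x hx y hy hxy
      dsimp only
      rw [hψ x hx, hψ y hy]
      apply integral_mono_ae (hint (Set.mem_Ioi.1 hy)) (hint (Set.mem_Ioi.1 hx))
      filter_upwards [ae_restrict_mem measurableSet_Ioi] with r hr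
      have hr' : (0:ℝ) < r := hr
      rw [gen14_negpow_F, gen14_negpow_F]
      apply mul_le_mul_of_nonneg_left
      · apply pow_le_pow_left₀ (le_max_right _ _)
        apply max_le_max _ le_rfl
        have : x / r ≤ y / r := by gcongr
        linarith
      · exact mul_nonneg (Nat.cast_nonneg _) (pow_nonneg (inv_nonneg.2 hr'.le) k)
    · refine ⟨convex_Ioi 0, ?_⟩
      intro x hx y hy a b ha hb hab
      have hxymem : a • x + b • y ∈ Set.Ioi (0:ℝ) := (convex_Ioi 0) hx hy ha hb hab
      simp only [smul_eq_mul] at hxymem ⊢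
      have hx0 : (0:ℝ) < x := hx
      have hy0 : (0:ℝ) < y := hy
      have hxy0 : (0:ℝ) < a * x + b * y := hxymem
      rw [hψ _ hxymem, hψ x hx, hψ y hy]
      have hptw : ∀ r ∈ Set.Ioi (0:ℝ),
          (-1:ℝ) ^ k * gen14F d k (a * x + b * y) r
            ≤ a * ((-1:ℝ) ^ k * gen14F d k x r) + b * ((-1:ℝ) ^ k * gen14F d k y r) := by
        intro r hr
        have hr' : (0:ℝ) < r := hr
        rw [gen14_negpow_F, gen14_negpow_F, gen14_negpow_F]
        have haff : 1 - (a * x + b * y) / r = a * (1 - x / r) + b * (1 - y / r) := by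
          field_simp
          linear_combination (-r) * hab
        rw [haff]
        have hC : (0:ℝ) ≤ ((d - 1).descFactorial k : ℝ) * (r⁻¹) ^ k :=
          mul_nonneg (Nat.cast_nonneg _) (pow_nonneg (inv_nonneg.2 hr'.le) k)
        calc ((d - 1).descFactorial k : ℝ) * (r⁻¹) ^ k
              * max (a * (1 - x / r) + b * (1 - y / r)) 0 ^ (d - 1 - k)
            ≤ ((d - 1).descFactorial k : ℝ) * (r⁻¹) ^ k
              * (a * max (1 - x / r) 0 ^ (d - 1 - k)
                + b * max (1 - y / r) 0 ^ (d - 1 - k)) :=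
              mul_le_mul_of_nonneg_left (gen14_posPart_pow_convex _ ha hb hab) hC
          _ = _ := by ring
      calc (∫ r in Set.Ioi (0:ℝ), (-1:ℝ) ^ k * gen14F d k (a * x + b * y) r ∂ν)
          ≤ ∫ r in Set.Ioi (0:ℝ),
              (a * ((-1:ℝ) ^ k * gen14F d k x r)
                + b * ((-1:ℝ) ^ k * gen14F d k y r)) ∂ν := by
            apply integral_mono_ae (hint hxy0)
              (((hint hx0).const_mul a).add ((hint hy0).const_mul b))
            filter_upwards [ae_restrict_mem measurableSet_Ioi] with r hr using hptw r hr
        _ = a • (∫ r in Set.Ioi (0:ℝ), (-1:ℝ) ^ k * gen14F d k x r ∂ν)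
            + b • (∫ r in Set.Ioi (0:ℝ), (-1:ℝ) ^ k * gen14F d k y r ∂ν) := by
            rw [integral_add ((hint hx0).const_mul a) ((hint hy0).const_mul b)]
            simp [integral_const_mul, smul_eq_mul]
  · -- tendsto atTop (nhds 0)
    have hν0 : Tendsto (fun t : ℝ => ν (Set.Ioi t)) atTop (nhds 0) := by
      have h := tendsto_measure_iInter_atTop (μ := ν) (s := fun t : ℝ => Set.Ioi t)
        (fun t => measurableSet_Ioi.nullMeasurableSet)
        (fun u v huv => Set.Ioi_subset_Ioi huv)
        ⟨1, (hfin 1 one_pos).ne⟩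
      have hempty : (⋂ t : ℝ, Set.Ioi t) = ∅ := by
        ext x
        simp only [Set.mem_iInter, Set.mem_Ioi, Set.mem_empty_iff_false, iff_false,
          not_forall, not_lt]
        exact ⟨x, le_rfl⟩
      rw [hempty, measure_empty] at h
      exact h
    have hν0' : Tendsto (fun t : ℝ => (ν (Set.Ioi t)).toReal) atTop (nhds 0) := by
      have := (ENNReal.tendsto_toReal (by simp : (0:ENNReal) ≠ ⊤)).comp hν0
      exact this
    apply squeeze_zero' (Eventually.of_forall hφ_nonneg) _ hν0'
    filter_upwards [eventually_gt_atTop (0:ℝ)] with t ht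
    rw [hφ t]
    exact ENNReal.toReal_mono (hfin t ht).ne (hbound t ht)
  · -- tendsto at 0⁺
    rw [Filter.tendsto_atTop]
    intro M
    have hmono : Monotone (fun n : ℕ => Set.Ioi (((n:ℝ) + 1)⁻¹)) := by
      intro n m hnm
      apply Set.Ioi_subset_Ioi
      gcongr

    have hcover : (⋃ n : ℕ, Set.Ioi (((n:ℝ) + 1)⁻¹)) = Set.Ioi (0:ℝ) := by
      ext x
      simp only [Set.mem_Ioi, Set.mem_iUnion]
      constructor
      · rintro ⟨n, hn⟩
        exact lt_trans (by positivity) hn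
      · intro hx
        obtain ⟨n, hn⟩ := exists_nat_gt x⁻¹
        refine ⟨n, ?_⟩
        rw [inv_lt_comm₀ (by positivity) hx]
        calc x⁻¹ < n := hn
          _ ≤ (n:ℝ) + 1 := by linarith
      -- fix later if inv_lt_comm₀ doesn't exist
    have hsup : (⨆ n : ℕ, ν (Set.Ioi (((n:ℝ) + 1)⁻¹))) = ⊤ := by
      rw [← hmono.measure_iUnion, hcover]
      exact hinf
    obtain ⟨n, hn⟩ : ∃ n : ℕ,
        ENNReal.ofReal (2 ^ (d - 1) * (|M| + 1)) < ν (Set.Ioi (((n:ℝ) + 1)⁻¹)) := by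
      have : ENNReal.ofReal (2 ^ (d - 1) * (|M| + 1))
          < ⨆ n : ℕ, ν (Set.Ioi (((n:ℝ) + 1)⁻¹)) := by
        rw [hsup]; exact ENNReal.ofReal_lt_top
      exact lt_iSup_iff.1 this
    set s : ℝ := ((n:ℝ) + 1)⁻¹ with hs_def
    have hs : 0 < s := by positivity
    have hsfin : ν (Set.Ioi s) ≠ ⊤ := (hfin s hs).ne
    filter_upwards [Ioo_mem_nhdsGT_of_mem (Set.mem_Ico.2 ⟨le_rfl, half_pos hs⟩)] with t ht
    obtain ⟨ht0, hts⟩ := ht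
    have hind : (∫ r in Set.Ioi (0:ℝ),
        Set.indicator (Set.Ioi s) (fun _ => (2⁻¹:ℝ) ^ (d - 1)) r ∂ν)
        = (ν (Set.Ioi s)).toReal * (2⁻¹:ℝ) ^ (d - 1) := by
      rw [integral_indicator_const _ measurableSet_Ioi, measureReal_def, Measure.restrict_apply
        measurableSet_Ioi, Set.inter_eq_self_of_subset_left (Set.Ioi_subset_Ioi hs.le),
        smul_eq_mul]
    have hlow : (ν (Set.Ioi s)).toReal * (2⁻¹:ℝ) ^ (d - 1) ≤ φ t := by
      rw [hφΦ t, gen14Phi, ← hind]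
      apply integral_mono_ae (gen14_indicator_integrable ν hfin hs _)
        (gen14F_integrable d 0 (by omega) ht0 ν hfin)
      filter_upwards [ae_restrict_mem measurableSet_Ioi] with r hr
      have hr' : (0:ℝ) < r := hr
      rcases le_or_gt r s with h | h
      · rw [Set.indicator_of_notMem (by simp [h.not_gt])]
        unfold gen14F
        positivity
      · rw [Set.indicator_of_mem (Set.mem_Ioi.2 h)]
        have hF : gen14F d 0 t r = max (1 - t / r) 0 ^ (d - 1) := by
          simp [gen14F]
        rw [hF]
        apply pow_le_pow_left₀ (by norm_num)
        have htr2 : t / r ≤ 2⁻¹ := by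
          rw [div_le_iff₀ hr']
          nlinarith
        exact le_max_of_le_left (by linarith)
    have htr : 2 ^ (d - 1) * (|M| + 1) ≤ (ν (Set.Ioi s)).toReal :=
      (ENNReal.ofReal_le_iff_le_toReal hsfin).1 hn.le
    have hpow : (2⁻¹:ℝ) ^ (d - 1) * 2 ^ (d - 1) = 1 := by
      rw [← mul_pow]; norm_num
    have h2 : (0:ℝ) < (2⁻¹:ℝ) ^ (d - 1) := by positivity
    have hM : M ≤ (ν (Set.Ioi s)).toReal * (2⁻¹:ℝ) ^ (d - 1) := by
      calc M ≤ |M| + 1 := by have := le_abs_self M; linarith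
        _ = (2 ^ (d - 1) * (|M| + 1)) * (2⁻¹:ℝ) ^ (d - 1) := by
            rw [mul_comm, ← mul_assoc, hpow, one_mul]
        _ ≤ _ := mul_le_mul_of_nonneg_right htr h2.le
    linarith
end

section
/- Fix an integer d ≥ 2 and a real number a > d − 1. Then for every x ∈ [0,a]: (Γ(a+1)/(Γ(d)·Γ(a−d+1))) · ∫_0^1 (1 − x/(a·b))_+^{d-1} · b^{d-1} (1−b)^{a−d} db = (1 − x/a)^a. (In probabilistic terms: if B has the Beta(d, a−d+1) distribution, then the random variable R = a·B has Williamson d-transform E[(1 − x/R)_+^{d-1}] = (1 − x/a)_+^a, the strict Clayton generator.) -/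
open MeasureTheory Real

/-- Real Beta integral. -/
lemma real_beta_integral {s t : ℝ} (hs : 0 < s) (ht : 0 < t) :
    ∫ u in (0:ℝ)..1, u ^ (s - 1) * (1 - u) ^ (t - 1)
      = Real.Gamma s * Real.Gamma t / Real.Gamma (s + t) := by
  have h := Complex.Gamma_mul_Gamma_eq_betaIntegral (s := (s : ℂ)) (t := (t : ℂ))
    (by simpa using hs) (by simpa using ht)
  have hbeta : Complex.betaIntegral (s : ℂ) (t : ℂ)
      = ((∫ u in (0:ℝ)..1, u ^ (s - 1) * (1 - u) ^ (t - 1) : ℝ) : ℂ) := by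
    rw [Complex.betaIntegral, ← intervalIntegral.integral_ofReal]
    refine intervalIntegral.integral_congr fun u hu => ?_
    rw [Set.uIcc_of_le (by norm_num : (0:ℝ) ≤ 1)] at hu
    rw [Complex.ofReal_mul, Complex.ofReal_cpow hu.1, Complex.ofReal_cpow (by linarith [hu.2])]
    push_cast
    ring
  rw [hbeta, ← Complex.ofReal_add, Complex.Gamma_ofReal, Complex.Gamma_ofReal,
    Complex.Gamma_ofReal, ← Complex.ofReal_mul, ← Complex.ofReal_mul] at h
  have h' := Complex.ofReal_injective h
  have hG : Real.Gamma (s + t) ≠ 0 := (Real.Gamma_pos_of_pos (by linarith)).ne'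
  field_simp [hG]
  linarith [h']

/-- If `B ∼ Beta(d, a−d+1)` then `R = a·B` has Williamson `d`-transform
`E[(1 − x/R)_+^{d-1}] = (1 − x/a)^a` for `x ∈ [0,a]` (the strict Clayton generator). -/
theorem clayton_williamson_transform
    (d : ℕ) (hd : 2 ≤ d) (a : ℝ) (ha : (d : ℝ) - 1 < a) :
    ∀ x ∈ Set.Icc (0 : ℝ) a,
      (Real.Gamma (a + 1) / (Real.Gamma d * Real.Gamma (a - d + 1))) *
          ∫ b in (0 : ℝ)..1,
            (max (1 - x / (a * b)) 0) ^ (d - 1) * b ^ (d - 1) * (1 - b) ^ (a - (d : ℝ))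
        = (1 - x / a) ^ a := by
  intro x hx
  have hd1 : (1:ℝ) ≤ (d:ℝ) := by exact_mod_cast Nat.one_le_of_lt hd
  have ha0 : 0 < a := by linarith
  set t : ℝ := x / a with htdef
  have ht0 : 0 ≤ t := div_nonneg hx.1 ha0.le
  have ht1 : t ≤ 1 := (div_le_one ha0).2 hx.2
  have hadm1 : (-1:ℝ) < a - d := by linarith
  -- integrand rewrite: x / (a*b) = t / b
  have hxab : ∀ b : ℝ, x / (a * b) = t / b := by
    intro b; rw [htdef, div_div]
  -- integrability of (1-b)^(a-d) on any interval
  have hint : ∀ c e : ℝ, IntervalIntegrable (fun b : ℝ => (1 - b) ^ (a - (d:ℝ))) volume c e := by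
    intro c e
    have h1 : IntervalIntegrable (fun y : ℝ => y ^ (a - (d:ℝ))) volume (1 - e) (1 - c) :=
      intervalIntegral.intervalIntegrable_rpow' hadm1
    simpa using (h1.comp_sub_left 1).symm
  -- the auxiliary function
  set g : ℝ → ℝ := fun b => (b - t) ^ (d - 1) * (1 - b) ^ (a - (d:ℝ)) with hg
  have hgint : ∀ c e : ℝ, IntervalIntegrable g volume c e := by
    intro c e
    exact (hint c e).continuousOn_mul (by fun_prop)
  -- f = (b-t)_+ version
  have hpt : ∀ b ∈ Set.uIcc (0:ℝ) 1,
      (max (1 - x / (a * b)) 0) ^ (d - 1) * b ^ (d - 1) * (1 - b) ^ (a - (d:ℝ))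
        = (max (b - t) 0) ^ (d - 1) * (1 - b) ^ (a - (d:ℝ)) := by
    intro b hb
    rw [Set.uIcc_of_le (by norm_num : (0:ℝ) ≤ 1)] at hb
    rw [hxab]
    rcases eq_or_lt_of_le hb.1 with h0 | h0
    · -- b = 0
      rw [← h0]
      have hd10 : d - 1 ≠ 0 := by omega
      rcases eq_or_lt_of_le ht0 with h1 | h1
      · simp [← h1, zero_pow hd10]
      · simp [zero_pow hd10, max_eq_right (by linarith : -t ≤ 0)]
    · congr 1
      rw [← mul_pow]
      congr 1
      have hb' : (1 - t / b) * b = b - t := by field_simp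
      rw [max_mul_of_nonneg _ _ h0.le, zero_mul, hb']
  have hsplit : (∫ b in (0:ℝ)..1,
        (max (1 - x / (a * b)) 0) ^ (d - 1) * b ^ (d - 1) * (1 - b) ^ (a - (d:ℝ)))
      = ∫ b in t..1, g b := by
    rw [intervalIntegral.integral_congr hpt]
    have hfint : ∀ c e : ℝ, IntervalIntegrable
        (fun b => (max (b - t) 0) ^ (d - 1) * (1 - b) ^ (a - (d:ℝ))) volume c e := by
      intro c e
      exact (hint c e).continuousOn_mul (by fun_prop)
    rw [← intervalIntegral.integral_add_adjacent_intervals (b := t) (hfint 0 t) (hfint t 1)]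
    have h1 : (∫ b in (0:ℝ)..t,
        (max (b - t) 0) ^ (d - 1) * (1 - b) ^ (a - (d:ℝ))) = 0 := by
      rw [intervalIntegral.integral_congr (g := fun _ => 0), intervalIntegral.integral_zero]
      intro b hb
      rw [Set.uIcc_of_le ht0] at hb
      have : max (b - t) 0 = 0 := max_eq_right (by linarith [hb.2])
      simp [this, zero_pow (by omega : d - 1 ≠ 0)]
    rw [h1, zero_add]
    refine intervalIntegral.integral_congr fun b hb => ?_
    rw [Set.uIcc_of_le ht1] at hb
    rw [hg]
    simp only [max_eq_left (by linarith [hb.1] : (0:ℝ) ≤ b - t)]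
  rw [hsplit]
  rcases eq_or_lt_of_le ht1 with ht1' | ht1'
  · -- t = 1, i.e. x = a
    rw [ht1', intervalIntegral.integral_same, mul_zero, ← ht1',
      Real.zero_rpow (by linarith : a ≠ 0) |>.symm]
    congr 1
    linarith
  · -- t < 1 : substitution b = (1-t) u + t
    have h1t : (0:ℝ) < 1 - t := by linarith
    have hsubst := intervalIntegral.integral_comp_mul_add (a := (0:ℝ)) (b := 1)
      (f := g) (c := 1 - t) h1t.ne' t
    rw [show (1 - t) * 0 + t = t by ring, show (1 - t) * 1 + t = 1 by ring] at hsubst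
    have hkey : (∫ u in (0:ℝ)..1, g ((1 - t) * u + t))
        = (1 - t) ^ ((d:ℝ) - 1) * (1 - t) ^ (a - (d:ℝ)) *
          ∫ u in (0:ℝ)..1, u ^ ((d:ℝ) - 1) * (1 - u) ^ ((a - (d:ℝ) + 1) - 1) := by
      rw [← intervalIntegral.integral_const_mul]
      refine intervalIntegral.integral_congr fun u hu => ?_
      rw [Set.uIcc_of_le (by norm_num : (0:ℝ) ≤ 1)] at hu
      have hu0 : 0 ≤ u := hu.1
      have hu1 : 0 ≤ 1 - u := by linarith [hu.2]
      rw [hg]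
      simp only
      rw [show (1 - t) * u + t - t = (1 - t) * u by ring,
        show 1 - ((1 - t) * u + t) = (1 - t) * (1 - u) by ring,
        Real.mul_rpow h1t.le hu1, mul_pow,
        ← Real.rpow_natCast (1 - t) (d - 1), ← Real.rpow_natCast u (d - 1)]
      have hcast : ((d - 1 : ℕ) : ℝ) = (d:ℝ) - 1 := by
        have : 1 ≤ d := by omega
        push_cast [this]; ring
      rw [hcast]
      ring_nf
    rw [hsubst] at hkey
    have hkey2 : (∫ b in t..1, g b)
        = (1 - t) * ((1 - t) ^ ((d:ℝ) - 1) * (1 - t) ^ (a - (d:ℝ)) *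
          (Real.Gamma (d:ℝ) * Real.Gamma (a - (d:ℝ) + 1) / Real.Gamma ((d:ℝ) + (a - (d:ℝ) + 1)))) := by
      rw [← real_beta_integral (by linarith : (0:ℝ) < (d:ℝ)) (by linarith : (0:ℝ) < a - (d:ℝ) + 1),
        ← hkey]
      rw [smul_eq_mul, ← mul_assoc, mul_inv_cancel₀ h1t.ne', one_mul]
    rw [hkey2]
    have hpow : (1 - t) * ((1 - t) ^ ((d:ℝ) - 1) * (1 - t) ^ (a - (d:ℝ))) = (1 - t) ^ a := by
      rw [← Real.rpow_add h1t, mul_comm, ← Real.rpow_add_one h1t.ne']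
      congr 1
      ring
    have hGsum : (d:ℝ) + (a - (d:ℝ) + 1) = a + 1 := by ring
    rw [hGsum]
    have hG1 : Real.Gamma (d:ℝ) ≠ 0 := (Real.Gamma_pos_of_pos (by linarith)).ne'
    have hG2 : Real.Gamma (a - (d:ℝ) + 1) ≠ 0 := (Real.Gamma_pos_of_pos (by linarith)).ne'
    have hG3 : Real.Gamma (a + 1) ≠ 0 := (Real.Gamma_pos_of_pos (by linarith)).ne'
    have : (1 - x / a) ^ a = (1 - t) ^ a := by rw [htdef]
    rw [this, ← hpow]
    field_simp
end

section
/- Fix an integer d ≥ 2. Let F and G be probability measures on the interval (0,1] such that ∫_{(0,1]} (1 − c/v)_+^{d-1} dF(v) = ∫_{(0,1]} (1 − c/v)_+^{d-1} dG(v) for every c ∈ (0,1). Then F = G. (That is, the Williamson d-transform is injective on probability measures on (0,1].) -/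
open MeasureTheory
open Set

lemma beta_pos (k m : ℕ) : 0 < ∫ t in (0:ℝ)..1, t ^ k * (1 - t) ^ m := by
  apply intervalIntegral.intervalIntegral_pos_of_pos_on
  · apply Continuous.intervalIntegrable; fun_prop
  · intro x hx
    exact mul_pos (pow_pos hx.1 _) (pow_pos (by linarith [hx.2]) _)
  · norm_num

lemma inner_int (k m : ℕ) (hm : m ≠ 0) {v : ℝ} (hv : v ∈ Ioc (0:ℝ) 1) :
    ∫ c in Ioo (0:ℝ) 1, c ^ k * (max (1 - c / v) 0) ^ m
      = (∫ t in (0:ℝ)..1, t ^ k * (1 - t) ^ m) * v ^ (k+1) := by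
  obtain ⟨hv0, hv1⟩ := hv
  have h1 : EqOn (fun c => c ^ k * (max (1 - c / v) 0) ^ m)
      ((Ioo 0 v).indicator (fun c => c ^ k * (1 - c / v) ^ m)) (Ioo (0:ℝ) 1) := by
    intro c hc
    by_cases hcv : c < v
    · have hmem : c ∈ Ioo 0 v := ⟨hc.1, hcv⟩
      rw [indicator_of_mem hmem]
      have hnn : 0 ≤ 1 - c / v := by
        rw [sub_nonneg, div_le_one hv0]; exact hcv.le
      simp only [max_eq_left hnn]
    · have hmem : c ∉ Ioo 0 v := fun h => hcv h.2
      rw [indicator_of_notMem hmem]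
      have hle : 1 - c / v ≤ 0 := by
        rw [sub_nonpos, le_div_iff₀ hv0, one_mul]; linarith
      simp only [max_eq_right hle, zero_pow hm, mul_zero]
  rw [setIntegral_congr_fun measurableSet_Ioo h1,
    setIntegral_indicator measurableSet_Ioo]
  have hint : Ioo (0:ℝ) 1 ∩ Ioo 0 v = Ioo 0 v := by
    rw [inter_eq_self_of_subset_right]
    exact Ioo_subset_Ioo le_rfl hv1
  rw [hint]
  have h2 : ∫ c in Ioo (0:ℝ) v, c ^ k * (1 - c / v) ^ m
      = ∫ c in (0:ℝ)..v, c ^ k * (1 - c / v) ^ m := by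
    rw [intervalIntegral.integral_of_le hv0.le, integral_Ioc_eq_integral_Ioo]
  rw [h2]
  have h3 := intervalIntegral.integral_comp_mul_right
    (fun c => c ^ k * (1 - c / v) ^ m) (a := 0) (b := 1) hv0.ne'
  simp only [zero_mul, one_mul, smul_eq_mul] at h3
  have h4 : ∫ (x : ℝ) in (0:ℝ)..1, (x * v) ^ k * (1 - x * v / v) ^ m
      = v ^ k * ∫ t in (0:ℝ)..1, t ^ k * (1 - t) ^ m := by
    rw [← intervalIntegral.integral_const_mul]
    apply intervalIntegral.integral_congr
    intro x hx
    simp only []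
    rw [mul_div_assoc, div_self hv0.ne', mul_one, mul_pow]
    ring
  rw [h4] at h3
  field_simp at h3 ⊢
  rw [pow_succ]
  linarith [h3]

lemma momA (k m : ℕ) (hm : m ≠ 0) (μ : Measure ℝ) [IsFiniteMeasure μ] :
    ∫ c in Ioo (0:ℝ) 1, c ^ k * ∫ v in Ioc (0:ℝ) 1, (max (1 - c / v) 0) ^ m ∂μ
      = (∫ t in (0:ℝ)..1, t ^ k * (1 - t) ^ m) * ∫ v in Ioc (0:ℝ) 1, v ^ (k+1) ∂μ := by
  have hmeas : Measurable (fun p : ℝ × ℝ => p.1 ^ k * (max (1 - p.1 / p.2) 0) ^ m) := by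
    apply Measurable.mul
    · exact (measurable_fst.pow_const k)
    · exact (((measurable_const.sub (measurable_fst.div measurable_snd)).max
        measurable_const).pow_const m)
  have hint : Integrable (fun p : ℝ × ℝ => p.1 ^ k * (max (1 - p.1 / p.2) 0) ^ m)
      ((volume.restrict (Ioo (0:ℝ) 1)).prod (μ.restrict (Ioc (0:ℝ) 1))) := by
    apply Integrable.mono' (integrable_const 1) hmeas.aestronglyMeasurable
    rw [Measure.prod_restrict]
    rw [ae_restrict_iff' (measurableSet_Ioo.prod measurableSet_Ioc)]
    apply Filter.Eventually.of_forall
    rintro ⟨c, v⟩ ⟨hc, hv⟩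
    simp only [norm_mul, norm_pow, Real.norm_eq_abs]
    have h1 : |c| ≤ 1 := by rw [abs_of_pos hc.1]; exact hc.2.le
    have h2 : |max (1 - c / v) 0| ≤ 1 := by
      rw [abs_of_nonneg (le_max_right _ _)]
      apply max_le _ zero_le_one
      have : 0 ≤ c / v := div_nonneg hc.1.le hv.1.le
      linarith
    calc |c| ^ k * |max (1 - c / v) 0| ^ m ≤ 1 ^ k * 1 ^ m := by
          apply mul_le_mul (pow_le_pow_left₀ (abs_nonneg _) h1 _)
            (pow_le_pow_left₀ (abs_nonneg _) h2 _) (by positivity) (by positivity)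
      _ = 1 := by norm_num
  have hswap := integral_integral_swap (f := fun c v => c ^ k * (max (1 - c / v) 0) ^ m)
    (μ := volume.restrict (Ioo (0:ℝ) 1)) (ν := μ.restrict (Ioc (0:ℝ) 1)) hint
  calc ∫ c in Ioo (0:ℝ) 1, c ^ k * ∫ v in Ioc (0:ℝ) 1, (max (1 - c / v) 0) ^ m ∂μ
      = ∫ c in Ioo (0:ℝ) 1, ∫ v in Ioc (0:ℝ) 1, c ^ k * (max (1 - c / v) 0) ^ m ∂μ := by
        congr 1; ext c; rw [integral_const_mul]
    _ = ∫ v in Ioc (0:ℝ) 1, ∫ c in Ioo (0:ℝ) 1, c ^ k * (max (1 - c / v) 0) ^ m ∂volume ∂μ :=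
        hswap
    _ = ∫ v in Ioc (0:ℝ) 1, (∫ t in (0:ℝ)..1, t ^ k * (1 - t) ^ m) * v ^ (k+1) ∂μ := by
        apply setIntegral_congr_fun measurableSet_Ioc
        intro v hv
        exact inner_int k m hm hv
    _ = (∫ t in (0:ℝ)..1, t ^ k * (1 - t) ^ m) * ∫ v in Ioc (0:ℝ) 1, v ^ (k+1) ∂μ := by
        rw [integral_const_mul]

lemma intpow (μ : Measure ℝ) [IsFiniteMeasure μ] (i : ℕ) :
    IntegrableOn (fun v : ℝ => v ^ i) (Ioc (0:ℝ) 1) μ := by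
  apply Integrable.mono' (integrable_const 1) ((continuous_pow i).aestronglyMeasurable)
  rw [ae_restrict_iff' measurableSet_Ioc]
  apply Filter.Eventually.of_forall
  intro v hv
  rw [Real.norm_eq_abs, abs_pow, abs_of_pos hv.1]
  exact pow_le_one₀ hv.1.le hv.2


/-- The Williamson `d`-transform is injective on probability measures
on `(0,1]`: if two such measures have the same Williamson `d`-transform on `(0,1)`,
they coincide. -/
theorem williamson_transform_injective
    (d : ℕ) (hd : 2 ≤ d) (F G : Measure ℝ)
    [IsProbabilityMeasure F] [IsProbabilityMeasure G]
    (hF : F {v | v ∉ Set.Ioc (0 : ℝ) 1} = 0)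
    (hG : G {v | v ∉ Set.Ioc (0 : ℝ) 1} = 0)
    (h : ∀ c ∈ Set.Ioo (0 : ℝ) 1,
      ∫ v in Set.Ioc (0 : ℝ) 1, (max (1 - c / v) 0) ^ (d - 1) ∂F
        = ∫ v in Set.Ioc (0 : ℝ) 1, (max (1 - c / v) 0) ^ (d - 1) ∂G) :
    F = G := by
  have hm : d - 1 ≠ 0 := by omega
  have hFr : F.restrict (Ioc (0:ℝ) 1) = F :=
    Measure.restrict_eq_self_of_ae_mem (ae_iff.mpr hF)
  have hGr : G.restrict (Ioc (0:ℝ) 1) = G :=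
    Measure.restrict_eq_self_of_ae_mem (ae_iff.mpr hG)
  have hF1 : (F (Ioc (0:ℝ) 1)).toReal = 1 := by
    rw [← Measure.restrict_apply_univ, hFr, measure_univ, ENNReal.toReal_one]
  have hG1 : (G (Ioc (0:ℝ) 1)).toReal = 1 := by
    rw [← Measure.restrict_apply_univ, hGr, measure_univ, ENNReal.toReal_one]
  -- all moments coincide
  have hmom : ∀ i : ℕ, ∫ v in Ioc (0:ℝ) 1, v ^ i ∂F = ∫ v in Ioc (0:ℝ) 1, v ^ i ∂G := by
    intro i
    cases i with
    | zero => simp [hF1, hG1]; rw [measureReal_def, measureReal_def, hF1, hG1]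
    | succ n =>
      have h1 : ∫ c in Ioo (0:ℝ) 1,
            c ^ n * ∫ v in Ioc (0:ℝ) 1, (max (1 - c / v) 0) ^ (d - 1) ∂F
          = ∫ c in Ioo (0:ℝ) 1,
            c ^ n * ∫ v in Ioc (0:ℝ) 1, (max (1 - c / v) 0) ^ (d - 1) ∂G :=
        setIntegral_congr_fun measurableSet_Ioo (fun c hc => by rw [h c hc])
      rw [momA n (d-1) hm F, momA n (d-1) hm G] at h1
      exact mul_left_cancel₀ (beta_pos n (d-1)).ne' h1
  -- polynomials
  have hpoly : ∀ p : Polynomial ℝ,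
      ∫ v in Ioc (0:ℝ) 1, p.eval v ∂F = ∫ v in Ioc (0:ℝ) 1, p.eval v ∂G := by
    intro p
    have hre : ∀ (μ : Measure ℝ), IsFiniteMeasure μ →
        ∫ v in Ioc (0:ℝ) 1, p.eval v ∂μ
          = ∑ i ∈ Finset.range (p.natDegree + 1),
              p.coeff i * ∫ v in Ioc (0:ℝ) 1, v ^ i ∂μ := by
      intro μ hμ
      have : ∀ v : ℝ, p.eval v
          = ∑ i ∈ Finset.range (p.natDegree + 1), p.coeff i * v ^ i := by
        intro v; exact p.eval_eq_sum_range (x := v)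
      simp_rw [this]
      rw [integral_finset_sum]
      · exact Finset.sum_congr rfl (fun i _ => integral_const_mul _ _)
      · exact fun i _ => (intpow μ i).const_mul _
    rw [hre F inferInstance, hre G inferInstance]
    exact Finset.sum_congr rfl (fun i _ => by rw [hmom i])
  -- continuous functions on Icc 0 1
  have hcont : ∀ g : ℝ → ℝ, ContinuousOn g (Icc (0:ℝ) 1) →
      ∫ v in Ioc (0:ℝ) 1, g v ∂F = ∫ v in Ioc (0:ℝ) 1, g v ∂G := by
    intro g hg
    set A := ∫ v in Ioc (0:ℝ) 1, g v ∂F with hA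
    set B := ∫ v in Ioc (0:ℝ) 1, g v ∂G with hB
    have hgInt : ∀ (μ : Measure ℝ), IsFiniteMeasure μ →
        IntegrableOn g (Ioc (0:ℝ) 1) μ := by
      intro μ hμ
      obtain ⟨C, hC⟩ := (isCompact_Icc ).exists_bound_of_continuousOn hg
      apply Integrable.mono' (integrable_const C)
        ((hg.mono Ioc_subset_Icc_self).aestronglyMeasurable measurableSet_Ioc)
      rw [ae_restrict_iff' measurableSet_Ioc]
      exact Filter.Eventually.of_forall (fun v hv => hC v (Ioc_subset_Icc_self hv))
    have key : ∀ ε : ℝ, 0 < ε → |A - B| ≤ 2 * ε := by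
      intro ε hε
      obtain ⟨p, hp⟩ := exists_polynomial_near_of_continuousOn 0 1 g hg ε hε
      have hb : ∀ (μ : Measure ℝ), IsFiniteMeasure μ → (μ (Ioc (0:ℝ) 1)).toReal = 1 →
          |∫ v in Ioc (0:ℝ) 1, g v ∂μ - ∫ v in Ioc (0:ℝ) 1, p.eval v ∂μ| ≤ ε := by
        intro μ hμ hμ1
        have hpInt : IntegrableOn (fun v => p.eval v) (Ioc (0:ℝ) 1) μ := by
          obtain ⟨C, hC⟩ := isCompact_Icc.exists_bound_of_continuousOn
            (p.continuous_aeval.continuousOn (s := Icc (0:ℝ) 1))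
          apply Integrable.mono' (integrable_const C) p.continuous_aeval.aestronglyMeasurable
          rw [ae_restrict_iff' measurableSet_Ioc]
          exact Filter.Eventually.of_forall (fun v hv => hC v (Ioc_subset_Icc_self hv))
        rw [← integral_sub (hgInt μ hμ) hpInt]
        have hnorm := norm_setIntegral_le_of_norm_le_const (μ := μ)
          (s := Ioc (0:ℝ) 1) (C := ε) (f := fun v => g v - p.eval v)
          (by rw [← hμ1] at *; exact measure_lt_top μ _)
          (fun x hx => by
            rw [Real.norm_eq_abs, abs_sub_comm]
            exact (hp x (Ioc_subset_Icc_self hx)).le)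
        rw [Real.norm_eq_abs, measureReal_def, hμ1, mul_one] at hnorm
        exact hnorm
      have e1 := hb F inferInstance hF1
      have e2 := hb G inferInstance hG1
      have h2 := hpoly p
      calc |A - B| ≤ |A - ∫ v in Ioc (0:ℝ) 1, p.eval v ∂F|
            + |(∫ v in Ioc (0:ℝ) 1, p.eval v ∂F) - B| := abs_sub_le _ _ _
        _ ≤ 2 * ε := by
            rw [h2, abs_sub_comm _ B]
            rw [h2] at e1
            linarith
    by_contra hne
    have hpos : 0 < |A - B| := abs_pos.mpr (sub_ne_zero.mpr hne)
    have := key (|A - B| / 4) (by linarith)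
    linarith
  -- bounded continuous, lintegral, conclude
  apply ext_of_forall_lintegral_eq_of_IsFiniteMeasure
  intro f
  have hgc : Continuous (fun x : ℝ => (f x : ℝ)) := NNReal.continuous_coe.comp f.continuous
  rw [lintegral_coe_eq_integral f (f.integrable_of_nnreal (μ := F)),
    lintegral_coe_eq_integral f (f.integrable_of_nnreal (μ := G))]
  congr 1
  rw [← hFr, ← hGr]
  exact hcont _ hgc.continuousOn
end
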